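/- Classification of closed L_lcc-expressions: for every closed L_lcc-expression s, exactly one of the following holds: s ∼_lcc Ω, or s ∼_lcc λx.s' for some s', or s ∼_lcc (c s1 … sn) for some constructor c and expressions s1,…,sn. Moreover, for closed s, t with s ≤_lcc t, one of the following holds: s ∼_lcc Ω; or s ∼_lcc (c s1 … sn), t ∼_lcc (c t1 … tn) and si ≤_lcc ti for all i; or s ∼_lcc λx.s', t ∼_lcc λx.t' with s' ≤_lcc^o t'; or s ∼_lcc λx.s', t ∼_lcc (c t1 … tn) and s' ∈ cBot. -/

import Mathlib

/-! # Core syntax for the calculi L_lcc, L_name and LR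

Following Schmidt-Schauß, Sabel, Machkasova,
"Simulation in the Call-by-Need Lambda-Calculus with Letrec, Case, Constructors, and Seq".

Expressions use de Bruijn indices.  A signature fixes the set of types, the data
constructors of each type together with their arities, and a distinguished type `Bool`
with the 0-ary constructors `True` and `False`. -/



structure Sig : Type 1 where
  TyName : Type
  CName : TyName → Type
  deceq : ∀ T, DecidableEq (CName T)
  arity : ∀ T, CName T → ℕ
  boolTy : TyName
  trueC : CName boolTy
  falseC : CName boolTy
  true_arity : arity boolTy trueC = 0
  false_arity : arity boolTy falseC = 0
  true_ne_false : trueC ≠ falseC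

variable (S : Sig)

/-- ℒ-expressions (de Bruijn): variables, applications, abstractions, fully saturated
constructor applications, `seq`, `case` (with exactly one alternative per constructor
of the scrutinized type; the alternative for `c` binds `arity c` variables), and
`letrec` with `n+1` mutually recursive bindings (so at least one binding); the
bindings and the body are under the `n+1` letrec binders.
The letrec-free expressions are the expressions of `L_lcc`. -/
inductive Exp : Type where
  | var : ℕ → Exp
  | app : Exp → Exp → Exp
  | lam : Exp → Exp
  | constr : (T : S.TyName) → (c : S.CName T) → (Fin (S.arity T c) → Exp) → Exp
  | seqE : Exp → Exp → Exp
  | caseE : (T : S.TyName) → Exp → ((c : S.CName T) → Exp) → Exp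
  | letrecE : (n : ℕ) → (Fin (n+1) → Exp) → Exp → Exp

namespace Core

variable {S}

/-- lift a renaming under `m` binders -/
def liftN (m : ℕ) (f : ℕ → ℕ) : ℕ → ℕ := fun k => if k < m then k else f (k - m) + m

/-- renaming of de Bruijn indices -/
def rename (f : ℕ → ℕ) : Exp S → Exp S
  | .var k => .var (f k)
  | .app u v => .app (rename f u) (rename f v)
  | .lam u => .lam (rename (liftN 1 f) u)
  | .constr T c args => .constr T c (fun i => rename f (args i))
  | .seqE u v => .seqE (rename f u) (rename f v)
  | .caseE T e alts => .caseE T (rename f e) (fun c => rename (liftN (S.arity T c) f) (alts c))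
  | .letrecE n b t => .letrecE n (fun i => rename (liftN (n+1) f) (b i)) (rename (liftN (n+1) f) t)

/-- lift a substitution under `m` binders -/
def upN (m : ℕ) (σ : ℕ → Exp S) : ℕ → Exp S :=
  fun k => if k < m then .var k else rename (· + m) (σ (k - m))

/-- parallel substitution -/
def subst (σ : ℕ → Exp S) : Exp S → Exp S
  | .var k => σ k
  | .app u v => .app (subst σ u) (subst σ v)
  | .lam u => .lam (subst (upN 1 σ) u)
  | .constr T c args => .constr T c (fun i => subst σ (args i))
  | .seqE u v => .seqE (subst σ u) (subst σ v)
  | .caseE T e alts => .caseE T (subst σ e) (fun c => subst (upN (S.arity T c) σ) (alts c))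
  | .letrecE n b t => .letrecE n (fun i => subst (upN (n+1) σ) (b i)) (subst (upN (n+1) σ) t)

/-- the substitution `[t/x0]` for the outermost binder -/
def consSub (t : Exp S) : ℕ → Exp S
  | 0 => t
  | (k+1) => .var k

/-- the substitution replacing the `m` innermost binders by `args` -/
def instSub {m : ℕ} (args : Fin m → Exp S) : ℕ → Exp S :=
  fun k => if h : k < m then args ⟨k, h⟩ else .var (k - m)

/-- `closedUnder d e`: all free de Bruijn indices of `e` are `< d` -/
def closedUnder : ℕ → Exp S → Prop
  | d, .var k => k < d
  | d, .app u v => closedUnder d u ∧ closedUnder d v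
  | d, .lam u => closedUnder (d+1) u
  | d, .constr _ _ args => ∀ i, closedUnder d (args i)
  | d, .seqE u v => closedUnder d u ∧ closedUnder d v
  | d, .caseE T e alts => closedUnder d e ∧ ∀ c, closedUnder (d + S.arity T c) (alts c)
  | d, .letrecE n b t => (∀ i, closedUnder (d + (n+1)) (b i)) ∧ closedUnder (d + (n+1)) t

/-- a closed expression -/
def closed (e : Exp S) : Prop := closedUnder 0 e

/-- letrec-free expressions, i.e. the expressions of the calculus `L_lcc` -/
def lfree : Exp S → Prop
  | .var _ => True
  | .app u v => lfree u ∧ lfree v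
  | .lam u => lfree u
  | .constr _ _ args => ∀ i, lfree (args i)
  | .seqE u v => lfree u ∧ lfree v
  | .caseE _ e alts => lfree e ∧ ∀ c, lfree (alts c)
  | .letrecE _ _ _ => False

/-- values: abstractions and constructor applications -/
def isValue : Exp S → Prop
  | .lam _ => True
  | .constr _ _ _ => True
  | _ => False

/-- constructor applications -/
def isConstrApp (e : Exp S) : Prop := ∃ T c args, e = .constr T c args

/-- the diverging expression `Ω = (λz. z z) (λx. x x)` -/
def Omega : Exp S :=
  .app (.lam (.app (.var 0) (.var 0))) (.lam (.app (.var 0) (.var 0)))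

/-- the constructor `True` (of the distinguished type `Bool`, arity 0) -/
def trueE : Exp S := .constr S.boolTy S.trueC (fun _ => .var 0)

/-- update the alternative for constructor `c0` -/
def updAlt {T : S.TyName} (alts : (c : S.CName T) → Exp S) (c0 : S.CName T) (e : Exp S) :
    (c : S.CName T) → Exp S :=
  fun c => letI := S.deceq T; if c = c0 then e else alts c

end Core
namespace Core

variable {S : Sig}

/-! ## Contexts -/

/-- reduction contexts of `L_lcc` (and `A`-contexts of `L_name`):
`A ::= [·] | (A s) | (case_T A of alts) | (seq A s)` -/
inductive ACtx (S : Sig) : Type where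
  | hole : ACtx S
  | appA : ACtx S → Exp S → ACtx S
  | seqA : ACtx S → Exp S → ACtx S
  | caseA : (T : S.TyName) → ACtx S → ((c : S.CName T) → Exp S) → ACtx S

/-- plugging an expression into an `A`-context -/
def plugA : ACtx S → Exp S → Exp S
  | .hole, e => e
  | .appA A t, e => .app (plugA A e) t
  | .seqA A t, e => .seqE (plugA A e) t
  | .caseA T A alts, e => .caseE T (plugA A e) alts

/-- renaming an `A`-context (there are no binders above the hole) -/
def renameA (f : ℕ → ℕ) : ACtx S → ACtx S
  | .hole => .hole
  | .appA A t => .appA (renameA f A) (rename f t)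
  | .seqA A t => .seqA (renameA f A) (rename f t)
  | .caseA T A alts => .caseA T (renameA f A) (fun c => rename (liftN (S.arity T c) f) (alts c))

/-- general (one-hole, possibly capturing) contexts over ℒ-expressions -/
inductive Ctx (S : Sig) : Type where
  | hole : Ctx S
  | appL : Ctx S → Exp S → Ctx S
  | appR : Exp S → Ctx S → Ctx S
  | lamC : Ctx S → Ctx S
  | seqL : Ctx S → Exp S → Ctx S
  | seqR : Exp S → Ctx S → Ctx S
  | constrC : (T : S.TyName) → (c : S.CName T) → Fin (S.arity T c) →
      (Fin (S.arity T c) → Exp S) → Ctx S → Ctx S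
  | caseScrut : (T : S.TyName) → Ctx S → ((c : S.CName T) → Exp S) → Ctx S
  | caseAlt : (T : S.TyName) → (c0 : S.CName T) → Exp S → ((c : S.CName T) → Exp S) →
      Ctx S → Ctx S
  | letrecB : (n : ℕ) → Fin (n+1) → (Fin (n+1) → Exp S) → Ctx S → Exp S → Ctx S
  | letrecT : (n : ℕ) → (Fin (n+1) → Exp S) → Ctx S → Ctx S

/-- plugging (capture-permitting) into a general context -/
def plugC : Ctx S → Exp S → Exp S
  | .hole, e => e
  | .appL C t, e => .app (plugC C e) t
  | .appR t C, e => .app t (plugC C e)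
  | .lamC C, e => .lam (plugC C e)
  | .seqL C t, e => .seqE (plugC C e) t
  | .seqR t C, e => .seqE t (plugC C e)
  | .constrC T c i args C, e => .constr T c (Function.update args i (plugC C e))
  | .caseScrut T C alts, e => .caseE T (plugC C e) alts
  | .caseAlt T c0 scrut alts C, e => .caseE T scrut (updAlt alts c0 (plugC C e))
  | .letrecB n i b C t, e => .letrecE n (Function.update b i (plugC C e)) t
  | .letrecT n b C, e => .letrecE n b (plugC C e)

/-- number of binders above the hole of a context -/
def depthC : Ctx S → ℕ
  | .hole => 0
  | .appL C _ => depthC C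
  | .appR _ C => depthC C
  | .lamC C => depthC C + 1
  | .seqL C _ => depthC C
  | .seqR _ C => depthC C
  | .constrC _ _ _ _ C => depthC C
  | .caseScrut _ C _ => depthC C
  | .caseAlt T c0 _ _ C => depthC C + S.arity T c0
  | .letrecB n _ _ C _ => depthC C + (n+1)
  | .letrecT n _ C => depthC C + (n+1)

/-- letrec-free contexts, i.e. the contexts of `L_lcc` -/
def lfreeCtx : Ctx S → Prop
  | .hole => True
  | .appL C t => lfreeCtx C ∧ lfree t
  | .appR t C => lfree t ∧ lfreeCtx C
  | .lamC C => lfreeCtx C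
  | .seqL C t => lfreeCtx C ∧ lfree t
  | .seqR t C => lfree t ∧ lfreeCtx C
  | .constrC _ _ _ args C => (∀ i, lfree (args i)) ∧ lfreeCtx C
  | .caseScrut _ C alts => lfreeCtx C ∧ ∀ c, lfree (alts c)
  | .caseAlt _ _ scrut alts C => lfree scrut ∧ (∀ c, lfree (alts c)) ∧ lfreeCtx C
  | .letrecB _ _ _ _ _ => False
  | .letrecT _ _ _ => False

/-! ## The calculus `L_lcc` -/

/-- the basic reduction rules (nbeta), (nseq), (ncase) of `L_lcc` -/
inductive LccBase : Exp S → Exp S → Prop where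
  | nbeta {u t} : LccBase (.app (.lam u) t) (subst (consSub t) u)
  | nseq {v t} : isValue v → LccBase (.seqE v t) t
  | ncase {T c args alts} :
      LccBase (.caseE T (.constr T c args) alts) (subst (instSub args) (alts c))

/-- normal-order reduction of `L_lcc`: a basic rule inside a reduction context -/
def lccStep (s t : Exp S) : Prop :=
  ∃ (A : ACtx S) (r r' : Exp S), LccBase r r' ∧ s = plugA A r ∧ t = plugA A r'

/-- `s` reduces in finitely many normal-order steps to the value `v` -/
def lccConvTo (s v : Exp S) : Prop := Relation.ReflTransGen lccStep s v ∧ isValue v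

/-- convergence in `L_lcc` -/
def lccConv (s : Exp S) : Prop := ∃ v, lccConvTo s v

/-- contextual preorder of `L_lcc` (quantifying over the letrec-free contexts) -/
def leLcc (s t : Exp S) : Prop :=
  ∀ C : Ctx S, lfreeCtx C → lccConv (plugC C s) → lccConv (plugC C t)

/-- contextual equivalence of `L_lcc` -/
def eqLcc (s t : Exp S) : Prop := leLcc s t ∧ leLcc t s

/-- open extension of a relation, w.r.t. closing `L_lcc`-substitutions -/
def openL (η : Exp S → Exp S → Prop) (s t : Exp S) : Prop :=
  ∀ σ : ℕ → Exp S, (∀ k, lfree (σ k)) →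
    closed (subst σ s) → closed (subst σ t) → η (subst σ s) (subst σ t)

/-- `cBot`: expressions all of whose closing `L_lcc`-instances diverge -/
def cBot (s : Exp S) : Prop :=
  ∀ σ : ℕ → Exp S, (∀ k, lfree (σ k)) → closed (subst σ s) → ¬ lccConv (subst σ s)

/-- greatest fixpoint of a (monotone) operator on relations:
the union of all post-fixed points -/
def gfpRel {α : Type*} (F : (α → α → Prop) → (α → α → Prop)) (a b : α) : Prop :=
  ∃ η, (∀ x y, η x y → F η x y) ∧ η a b

/-- the operator `F_lcc` for applicative similarity in `L_lcc` -/
def Flcc (η : Exp S → Exp S → Prop) (s t : Exp S) : Prop :=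
  (∀ s', lccConvTo s (.lam s') →
      ((∃ t', lccConvTo t (.lam t') ∧ openL η s' t') ∨
       (∃ T c targs, lccConvTo t (.constr T c targs) ∧ cBot s'))) ∧
  (∀ T c args, lccConvTo s (.constr T c args) →
      ∃ targs, lccConvTo t (.constr T c targs) ∧ ∀ i, η (args i) (targs i))

/-- applicative similarity `≼_lcc` in `L_lcc` -/
def simLcc : Exp S → Exp S → Prop := gfpRel Flcc

end Core
namespace Core

variable {S : Sig}

/-! ## The test contexts `Q_lcc` and `Q_CE` -/

/-- the context `case_T [·] of … ((c x1 … x_ar) → x_i) …`, all other alternatives `Ω` -/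
def caseSelCtx (T : S.TyName) (c : S.CName T) (i : Fin (S.arity T c)) : Exp S → Exp S :=
  fun e => .caseE T e (fun c' => letI := S.deceq T; if c' = c then .var i else Omega)

/-- the context `case_T [·] of … ((c x1 … x_ar) → True) …`, all other alternatives `Ω` -/
def caseTrueCtx (T : S.TyName) (c : S.CName T) : Exp S → Exp S :=
  fun e => .caseE T e (fun c' => letI := S.deceq T; if c' = c then trueE else Omega)

/-- the set `Q_lcc`: application to a closed `L_lcc`-expression, the selector case
contexts, and the `True` case contexts -/
def Qlcc (S : Sig) : Set (Exp S → Exp S) :=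
  {f | (∃ r : Exp S, lfree r ∧ closed r ∧ f = fun e => .app e r) ∨
       (∃ T c i, f = caseSelCtx T c i) ∨
       (∃ T c, f = caseTrueCtx T c)}

/-- the set `CE_lcc` of closed letrec-free expressions generated by
`r ::= Ω | λx.s | (c r1 … r_ar)` -/
inductive CE : Exp S → Prop where
  | omega : CE Omega
  | abs {u : Exp S} : lfree (Exp.lam u) → closed (Exp.lam u) → CE (.lam u)
  | constrI {T c} {args : Fin (S.arity T c) → Exp S} :
      (∀ i, CE (args i)) → CE (.constr T c args)

/-- the set `Q_CE`: like `Q_lcc`, but the arguments in application contexts are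
restricted to `CE_lcc` -/
def QCE (S : Sig) : Set (Exp S → Exp S) :=
  {f | (∃ r : Exp S, CE r ∧ f = fun e => .app e r) ∨
       (∃ T c i, f = caseSelCtx T c i) ∨
       (∃ T c, f = caseTrueCtx T c)}

/-- `Q1 (Q2 (… (Qn s)))` -/
def applyAll (l : List (Exp S → Exp S)) (s : Exp S) : Exp S := l.foldr (fun f e => f e) s

/-! ### `Q`-similarity and the inductive `Q`-preorder in `L_lcc` -/

/-- the `Q`-experiment operator for `L_lcc`, instantiated with a set `𝒬` of contexts -/
def FQlcc (𝒬 : Set (Exp S → Exp S)) (η : Exp S → Exp S → Prop) (s t : Exp S) : Prop :=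
  ∀ v1, lccConvTo s v1 → ∃ v2, lccConvTo t v2 ∧ ∀ f ∈ 𝒬, η (f v1) (f v2)

/-- `𝒬`-similarity in `L_lcc` -/
def simQlcc (𝒬 : Set (Exp S → Exp S)) : Exp S → Exp S → Prop := gfpRel (FQlcc 𝒬)

/-- the inductively defined preorder `≤_{lcc,𝒬}` -/
def leQlcc (𝒬 : Set (Exp S → Exp S)) (s t : Exp S) : Prop :=
  ∀ l : List (Exp S → Exp S), (∀ f ∈ l, f ∈ 𝒬) →
    lccConv (applyAll l s) → lccConv (applyAll l t)

end Core
namespace Core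

variable {S : Sig}

/-! ## The call-by-need calculus `LR` -/

/-- variable-to-variable binding chains in a letrec environment -/
inductive derefChain {n : ℕ} (b : Fin (n+1) → Exp S) : Fin (n+1) → Fin (n+1) → Prop where
  | refl (i) : derefChain b i i
  | step {i j k : Fin (n+1)} : b i = .var (j : ℕ) → derefChain b j k → derefChain b i k

/-- `Needed b body i`: binding `i` is visited by the labeling algorithm (its value is
needed), starting from the body of the top-level letrec -/
inductive Needed {n : ℕ} (b : Fin (n+1) → Exp S) (body : Exp S) : Fin (n+1) → Prop where
  | ofBody {A : ACtx S} {i : Fin (n+1)} : body = plugA A (.var (i : ℕ)) → Needed b body i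
  | ofBind {k} {A : ACtx S} {i : Fin (n+1)} :
      Needed b body k → b k = plugA A (.var (i : ℕ)) → Needed b body i

/-- renaming used when merging letrec environments: the outer part
(`N` outer bindings, `M` inner bindings) -/
def rhoOut (N M : ℕ) : ℕ → ℕ := fun k => if k < N then k else k + M

/-- renaming used when merging letrec environments: the inner part -/
def rhoIn (N M : ℕ) : ℕ → ℕ :=
  fun k => if k < M then k + N else if k < M + N then k - M else k

/-- merged environment of `(llet-in)`: outer bindings first, then inner bindings -/
def mergeEnv {n m : ℕ} (b : Fin (n+1) → Exp S) (b2 : Fin (m+1) → Exp S) :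
    Fin (n+m+1+1) → Exp S :=
  fun j => if h : (j : ℕ) < n+1
    then rename (rhoOut (n+1) (m+1)) (b ⟨j, h⟩)
    else rename (rhoIn (n+1) (m+1)) (b2 ⟨(j : ℕ) - (n+1), by omega⟩)

/-- merged environment of `(llet-e)`: the environment of the letrec bound at `i`
is flattened into the outer environment, the binding `i` becomes the inner body -/
def mergeEnvAt {n m : ℕ} (b : Fin (n+1) → Exp S) (i : Fin (n+1))
    (b2 : Fin (m+1) → Exp S) (t2 : Exp S) : Fin (n+m+1+1) → Exp S :=
  fun j => if h : (j : ℕ) < n+1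
    then (if (⟨j, h⟩ : Fin (n+1)) = i
          then rename (rhoIn (n+1) (m+1)) t2
          else rename (rhoOut (n+1) (m+1)) (b ⟨j, h⟩))
    else rename (rhoIn (n+1) (m+1)) (b2 ⟨(j : ℕ) - (n+1), by omega⟩)

/-- the environment produced by `(case-in)`/`(case-e)` with `arity c = m+1`:
all old bindings are shifted, binding `j` becomes `c y1 … y_{m+1}` for the fresh
bindings `y_q = s_q` appended at the end -/
def caseShareEnv {n m : ℕ} (b : Fin (n+1) → Exp S) (j : Fin (n+1))
    {T : S.TyName} (c : S.CName T) (h : S.arity T c = m+1)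
    (args : Fin (S.arity T c) → Exp S) : Fin (n+m+1+1) → Exp S :=
  fun p => if hp : (p : ℕ) < n+1
    then (if (⟨p, hp⟩ : Fin (n+1)) = j
          then .constr T c (fun q => .var (n+1+(q : ℕ)))
          else rename (rhoOut (n+1) (m+1)) (b ⟨p, hp⟩))
    else rename (rhoOut (n+1) (m+1)) (args (Fin.cast h.symm ⟨(p : ℕ) - (n+1), by omega⟩))

/-- the replacement for a `(case-in)`/`(case-e)` redex: `letrec z1 = y1, …, z_{m+1} = y_{m+1}
in alt`, where the `y_q` are the fresh environment bindings (indices `n+1+q` at top level) -/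
def caseShareBody {n m : ℕ} {T : S.TyName} (c : S.CName T) (_h : S.arity T c = m+1)
    (alts : (c : S.CName T) → Exp S) : Exp S :=
  .letrecE m (fun q => .var (n+1+(m+1)+(q : ℕ)))
    (rename (liftN (m+1) (rhoOut (n+1) (m+1))) (alts c))

/-- the basic `LR`-rules not involving the top-level environment:
(lbeta), (seq-c), (case-c), (lapp), (lseq), (lcase) -/
inductive LRbase : Exp S → Exp S → Prop where
  | lbeta {u t} :
      LRbase (.app (.lam u) t) (.letrecE 0 (fun _ => rename (· + 1) t) u)
  | seqc {v t} : isValue v → LRbase (.seqE v t) t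
  | casec0 {T c args alts} (h : S.arity T c = 0) :
      LRbase (.caseE T (.constr T c args) alts) (alts c)
  | casec1 {T c args alts m} (h : S.arity T c = m+1) :
      LRbase (.caseE T (.constr T c args) alts)
        (.letrecE m (fun i => rename (· + (m+1)) (args (Fin.cast h.symm i))) (alts c))
  | lapp {n b e t} :
      LRbase (.app (.letrecE n b e) t) (.letrecE n b (.app e (rename (· + (n+1)) t)))
  | lseq {n b e t} :
      LRbase (.seqE (.letrecE n b e) t) (.letrecE n b (.seqE e (rename (· + (n+1)) t)))
  | lcase {n b e T alts} :
      LRbase (.caseE T (.letrecE n b e) alts)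
        (.letrecE n b (.caseE T e (fun c => rename (liftN (S.arity T c) (· + (n+1))) (alts c))))

/-- normal-order reduction `→_LR` of the call-by-need calculus `LR`:
the rules of Fig. 1, applied at the position determined by the labeling algorithm
(in the body or in a needed binding of the top-level letrec, or — for expressions
without a top-level letrec — along the application/seq/case spine). -/
inductive LRstep : Exp S → Exp S → Prop where
  /- basic rule at the top (no top-level letrec environment involved): -/
  | topA {A : ACtx S} {r r'} : LRbase r r' → LRstep (plugA A r) (plugA A r')
  /- basic rule in the body of the top-level letrec: -/
  | bodyA {n} {b : Fin (n+1) → Exp S} {A : ACtx S} {r r'} :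
      LRbase r r' → LRstep (.letrecE n b (plugA A r)) (.letrecE n b (plugA A r'))
  /- basic rule inside a needed binding: -/
  | bindA {n} {b : Fin (n+1) → Exp S} {body} {i : Fin (n+1)} {A : ACtx S} {r r'} :
      Needed b body i → b i = plugA A r → LRbase r r' →
      LRstep (.letrecE n b body) (.letrecE n (Function.update b i (plugA A r')) body)
  /- (llet-in): -/
  | lletIn {n b m b2 t2} :
      LRstep (.letrecE n b (.letrecE m b2 t2))
        (.letrecE (n+m+1) (mergeEnv b b2) (rename (rhoIn (n+1) (m+1)) t2))
  /- (llet-e): -/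
  | lletE {n b body} {i : Fin (n+1)} {m b2 t2} :
      Needed b body i → b i = .letrecE m b2 t2 →
      LRstep (.letrecE n b body)
        (.letrecE (n+m+1) (mergeEnvAt b i b2 t2) (rename (rhoOut (n+1) (m+1)) body))
  /- (cp-in): -/
  | cpIn {n} {b : Fin (n+1) → Exp S} {A : ACtx S} {i j : Fin (n+1)} {u} :
      derefChain b i j → b j = .lam u →
      LRstep (.letrecE n b (plugA A (.var (i : ℕ)))) (.letrecE n b (plugA A (.lam u)))
  /- (cp-e): -/
  | cpE {n} {b : Fin (n+1) → Exp S} {body} {k : Fin (n+1)} {A : ACtx S} {i j : Fin (n+1)} {u} :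
      Needed b body k → b k = plugA A (.var (i : ℕ)) → derefChain b i j → b j = .lam u →
      LRstep (.letrecE n b body) (.letrecE n (Function.update b k (plugA A (.lam u))) body)
  /- (seq-in): -/
  | seqIn {n} {b : Fin (n+1) → Exp S} {A : ACtx S} {i j : Fin (n+1)} {t} :
      derefChain b i j → isConstrApp (b j) →
      LRstep (.letrecE n b (plugA A (.seqE (.var (i : ℕ)) t)))
        (.letrecE n b (plugA A t))
  /- (seq-e): -/
  | seqEe {n} {b : Fin (n+1) → Exp S} {body} {k : Fin (n+1)} {A : ACtx S} {i j : Fin (n+1)} {t} :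
      Needed b body k → b k = plugA A (.seqE (.var (i : ℕ)) t) →
      derefChain b i j → isConstrApp (b j) →
      LRstep (.letrecE n b body) (.letrecE n (Function.update b k (plugA A t)) body)
  /- (case-in), scrutinized constructor of arity 0: -/
  | caseIn0 {n} {b : Fin (n+1) → Exp S} {A : ACtx S} {i j : Fin (n+1)} {T c args alts} :
      derefChain b i j → b j = .constr T c args → S.arity T c = 0 →
      LRstep (.letrecE n b (plugA A (.caseE T (.var (i : ℕ)) alts)))
        (.letrecE n b (plugA A (alts c)))
  /- (case-e), scrutinized constructor of arity 0: -/
  | caseE0 {n} {b : Fin (n+1) → Exp S} {body} {k : Fin (n+1)} {A : ACtx S} {i j : Fin (n+1)}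
      {T c args alts} :
      Needed b body k → b k = plugA A (.caseE T (.var (i : ℕ)) alts) →
      derefChain b i j → b j = .constr T c args → S.arity T c = 0 →
      LRstep (.letrecE n b body) (.letrecE n (Function.update b k (plugA A (alts c))) body)
  /- (case-in), arity ≥ 1: the constructor arguments are shared in fresh bindings -/
  | caseIn1 {n} {b : Fin (n+1) → Exp S} {A : ACtx S} {i j : Fin (n+1)} {T c args alts m}
      (h : S.arity T c = m+1) :
      derefChain b i j → b j = .constr T c args →
      LRstep (.letrecE n b (plugA A (.caseE T (.var (i : ℕ)) alts)))
        (.letrecE (n+m+1) (caseShareEnv b j c h args)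
          (plugA (renameA (rhoOut (n+1) (m+1)) A) (caseShareBody (n := n) c h alts)))
  /- (case-e), arity ≥ 1: -/
  | caseE1 {n} {b : Fin (n+1) → Exp S} {body} {k : Fin (n+1)} {A : ACtx S} {i j : Fin (n+1)}
      {T c args alts m} (h : S.arity T c = m+1) :
      Needed b body k → b k = plugA A (.caseE T (.var (i : ℕ)) alts) →
      derefChain b i j → b j = .constr T c args →
      LRstep (.letrecE n b body)
        (.letrecE (n+m+1)
          (Function.update (caseShareEnv b j c h args)
            (Fin.castLE (by omega) k)
            (plugA (renameA (rhoOut (n+1) (m+1)) A) (caseShareBody (n := n) c h alts)))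
          (rename (rhoOut (n+1) (m+1)) body))

/-- weak head normal forms of `LR`: values, `letrec Env in v` for a value `v`, and
`letrec x1 = (c s⃗), x2 = x1, …, xm = x_{m-1}, Env in xm` -/
def isLRwhnf (s : Exp S) : Prop :=
  isValue s ∨
  ∃ (n : ℕ) (b : Fin (n+1) → Exp S) (body : Exp S), s = .letrecE n b body ∧
    (isValue body ∨ ∃ i j : Fin (n+1), body = .var (i : ℕ) ∧ derefChain b i j ∧ isConstrApp (b j))

/-- `s` reduces in finitely many `→_LR`-steps to an `LR`-WHNF `v` -/
def lrConvTo (s v : Exp S) : Prop := Relation.ReflTransGen LRstep s v ∧ isLRwhnf v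

/-- convergence in `LR` -/
def lrConv (s : Exp S) : Prop := ∃ v, lrConvTo s v

/-- contextual preorder of `LR` -/
def leLR (s t : Exp S) : Prop := ∀ C : Ctx S, lrConv (plugC C s) → lrConv (plugC C t)

/-- contextual equivalence of `LR` -/
def eqLR (s t : Exp S) : Prop := leLR s t ∧ leLR t s

end Core
namespace Core

variable {S : Sig}

/-! ## The call-by-name calculus `L_name` -/

/-- a letrec frame (one `letrec` environment) -/
def Frame (S : Sig) : Type := Σ n : ℕ, Fin (n+1) → Exp S

/-- plugging under a stack of letrec frames (`L`-contexts), outermost frame first -/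
def plugFrames : List (Frame S) → Exp S → Exp S
  | [], e => e
  | ⟨n, b⟩ :: fs, e => .letrecE n b (plugFrames fs e)

/-- looking up a de Bruijn index in a stack of letrec frames given innermost-first;
the result is weakened to the innermost level -/
def lookRev : List (Frame S) → ℕ → Option (Exp S)
  | [], _ => none
  | ⟨n, b⟩ :: rest, k =>
      if h : k < n+1 then some (b ⟨k, h⟩)
      else (lookRev rest (k - (n+1))).map (rename (· + (n+1)))

/-- the basic rules of `L_name`: (beta), (seq), (case) — with substitution —
and (lapp), (lseq), (lcase) -/
inductive NBase : Exp S → Exp S → Prop where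
  | beta {u t} : NBase (.app (.lam u) t) (subst (consSub t) u)
  | seqv {v t} : isValue v → NBase (.seqE v t) t
  | casec {T c args alts} :
      NBase (.caseE T (.constr T c args) alts) (subst (instSub args) (alts c))
  | lapp {n b e t} :
      NBase (.app (.letrecE n b e) t) (.letrecE n b (.app e (rename (· + (n+1)) t)))
  | lseq {n b e t} :
      NBase (.seqE (.letrecE n b e) t) (.letrecE n b (.seqE e (rename (· + (n+1)) t)))
  | lcase {n b e T alts} :
      NBase (.caseE T (.letrecE n b e) alts)
        (.letrecE n b (.caseE T e (fun c => rename (liftN (S.arity T c) (· + (n+1))) (alts c))))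

/-- normal-order reduction `→_name` of `L_name`: a basic rule, or the copy rule (gcp),
inside a reduction context `L[A]` -/
inductive NStep : Exp S → Exp S → Prop where
  | base {fs : List (Frame S)} {A : ACtx S} {r r'} :
      NBase r r' → NStep (plugFrames fs (plugA A r)) (plugFrames fs (plugA A r'))
  | gcp {fs : List (Frame S)} {A : ACtx S} {k : ℕ} {e : Exp S} :
      lookRev fs.reverse k = some e →
      NStep (plugFrames fs (plugA A (.var k))) (plugFrames fs (plugA A e))

/-- weak head normal forms of `L_name`: `L[v]` for a value `v` -/
def isNameWhnf (s : Exp S) : Prop :=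
  ∃ (fs : List (Frame S)) (v : Exp S), s = plugFrames fs v ∧ isValue v

/-- `s` reduces in finitely many `→_name`-steps to an `L_name`-WHNF `v` -/
def nameConvTo (s v : Exp S) : Prop := Relation.ReflTransGen NStep s v ∧ isNameWhnf v

/-- convergence in `L_name` -/
def nameConv (s : Exp S) : Prop := ∃ v, nameConvTo s v

/-- contextual preorder of `L_name` -/
def leName (s t : Exp S) : Prop := ∀ C : Ctx S, nameConv (plugC C s) → nameConv (plugC C t)

/-- contextual equivalence of `L_name` -/
def eqName (s t : Exp S) : Prop := leName s t ∧ leName t s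

/-! ## The translation `N : L_name → L_lcc` via multi-fixpoint combinators -/

/-- iterated application `f a1 … an` -/
def apps (f : Exp S) (l : List (Exp S)) : Exp S := l.foldl .app f

/-- iterated abstraction `λ^k. e` -/
def lamN : ℕ → Exp S → Exp S
  | 0, e => e
  | (k+1), e => .lam (lamN k e)

/-- shift all indices `≥ c` by `k` -/
def shiftCut (c k : ℕ) : Exp S → Exp S := rename (fun x => if x < c then x else x + k)

/-- the argument list `[g (N-1), …, g 0]`, so that after `N` beta steps the
binder with de Bruijn index `i` receives `g i` -/
def argsOf {N : ℕ} (g : Fin N → Exp S) : List (Exp S) := (List.ofFn g).reverse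

/-- `U_i = (x_i' x_1' … x_n')` (under the outer binders) -/
def Uarg (N : ℕ) (i : Fin N) : Exp S :=
  apps (.var (i : ℕ)) (argsOf (fun j : Fin N => .var (j : ℕ)))

/-- `X_i' = λ x1 … xn. F_i (x1 x1 … xn) … (xn x1 … xn)` with `F_i = λ x1 … xn. gi` -/
def Xarg (N : ℕ) (gi : Exp S) : Exp S :=
  lamN N (apps (lamN N (shiftCut N N gi))
    (argsOf (fun j : Fin N => apps (.var (j : ℕ)) (argsOf (fun l : Fin N => .var (l : ℕ))))))

/-- the translation of one letrec: `(λ x1' … xn'. (λ x1 … xn. t') U1 … Un) X1' … Xn'` -/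
def letrecTrans (N : ℕ) (g : Fin N → Exp S) (t' : Exp S) : Exp S :=
  apps (lamN N (apps (lamN N (shiftCut N N t')) (argsOf (Uarg N))))
    (argsOf (fun i => Xarg N (g i)))

/-- the translation `N : L_name → L_lcc`, eliminating letrec by multi-fixpoint
combinators; it is homomorphic on all other constructs.
(The translation `W : LR → L_name` is the identity.) -/
def Ntr : Exp S → Exp S
  | .var k => .var k
  | .app u v => .app (Ntr u) (Ntr v)
  | .lam u => .lam (Ntr u)
  | .constr T c args => .constr T c (fun i => Ntr (args i))
  | .seqE u v => .seqE (Ntr u) (Ntr v)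
  | .caseE T e alts => .caseE T (Ntr e) (fun c => Ntr (alts c))
  | .letrecE n b t => letrecTrans (n+1) (fun i => Ntr (b i)) (Ntr t)

end Core
namespace Core

variable {S : Sig}

/-! ## `Q`-similarity in `LR` -/

/-- open extension of a relation w.r.t. closing ℒ-substitutions -/
def openAll (η : Exp S → Exp S → Prop) (s t : Exp S) : Prop :=
  ∀ σ : ℕ → Exp S, closed (subst σ s) → closed (subst σ t) → η (subst σ s) (subst σ t)

/-- the `Q`-experiment operator for `LR`, instantiated with a set `𝒬` of contexts -/
def FQLR (𝒬 : Set (Exp S → Exp S)) (η : Exp S → Exp S → Prop) (s t : Exp S) : Prop :=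
  ∀ v1, lrConvTo s v1 → ∃ v2, lrConvTo t v2 ∧ ∀ f ∈ 𝒬, η (f v1) (f v2)

/-- `𝒬`-similarity in `LR` -/
def simQLR (𝒬 : Set (Exp S → Exp S)) : Exp S → Exp S → Prop := gfpRel (FQLR 𝒬)

/-- the inductively defined preorder `≤_{LR,𝒬}` -/
def leQLR (𝒬 : Set (Exp S → Exp S)) (s t : Exp S) : Prop :=
  ∀ l : List (Exp S → Exp S), (∀ f ∈ l, f ∈ 𝒬) →
    lrConv (applyAll l s) → lrConv (applyAll l t)

end Core
namespace Core

variable {S : Sig}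

/-! ### Basic lemmas on renaming and substitution -/

lemma liftN_liftN (m d : ℕ) (f : ℕ → ℕ) : liftN m (liftN d f) = liftN (m+d) f := by
  funext k
  simp only [liftN]
  rcases lt_or_ge k m with h | h
  · simp [h, show k < m + d by omega]
  · rcases lt_or_ge k (m+d) with h2 | h2
    · have hd : k - m < d := by omega
      simp only [if_neg (by omega : ¬ k < m), if_pos hd, if_pos h2]
      omega
    · simp only [if_neg (by omega : ¬ k < m), if_neg (by omega : ¬ k - m < d),
        if_neg (by omega : ¬ k < m + d)]
      have : k - m - d = k - (m + d) := by omega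
      rw [this]; omega

lemma liftN_comp (m : ℕ) (f g : ℕ → ℕ) :
    (fun k => liftN m f (liftN m g k)) = liftN m (fun k => f (g k)) := by
  funext k
  simp only [liftN]
  rcases lt_or_ge k m with h | h
  · simp [h]
  · simp only [if_neg (by omega : ¬ k < m), if_neg (by omega : ¬ g (k-m) + m < m)]
    have : g (k - m) + m - m = g (k - m) := by omega
    rw [this]

lemma liftN_id (m : ℕ) (f : ℕ → ℕ) (hf : ∀ k, f k = k) : ∀ k, liftN m f k = k := by
  intro k; simp only [liftN]
  split
  · rfl
  · rw [hf]; omega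

lemma rename_rename (e : Exp S) : ∀ f g, rename f (rename g e) = rename (fun k => f (g k)) e := by
  induction e with
  | var k => intro f g; rfl
  | app u v ihu ihv => intro f g; simp [rename, ihu, ihv]
  | lam u ih => intro f g; simp [rename, ih, liftN_comp]
  | constr T c args ih => intro f g; simp only [rename]; congr 1; funext i; exact ih i f g
  | seqE u v ihu ihv => intro f g; simp [rename, ihu, ihv]
  | caseE T e alts ihe ih =>
    intro f g; simp only [rename, ihe]
    congr 1; funext c; rw [ih c, liftN_comp]
  | letrecE n b t ihb iht =>
    intro f g; simp only [rename]
    congr 1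
    · funext i; rw [ihb i, liftN_comp]
    · rw [iht, liftN_comp]

lemma rename_id (e : Exp S) : ∀ f, (∀ k, f k = k) → rename f e = e := by
  induction e with
  | var k => intro f hf; simp [rename, hf]
  | app u v ihu ihv => intro f hf; simp [rename, ihu f hf, ihv f hf]
  | lam u ih =>
    intro f hf; simp only [rename]
    rw [ih _ (liftN_id 1 f hf)]
  | constr T c args ih =>
    intro f hf; simp only [rename]; congr 1; funext i; exact ih i f hf
  | seqE u v ihu ihv => intro f hf; simp [rename, ihu f hf, ihv f hf]
  | caseE T e alts ihe ih =>
    intro f hf; simp only [rename, ihe f hf]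
    congr 1; funext c
    exact ih c _ (liftN_id _ f hf)
  | letrecE n b t ihb iht =>
    intro f hf; simp only [rename]
    congr 1
    · funext i; exact ihb i _ (liftN_id _ f hf)
    · exact iht _ (liftN_id _ f hf)

end Core
namespace Core

variable {S : Sig}

lemma upN_upN (m d : ℕ) (σ : ℕ → Exp S) : upN m (upN d σ) = upN (m+d) σ := by
  funext k
  simp only [upN]
  rcases lt_or_ge k m with h | h
  · simp [h, show k < m + d by omega]
  · rcases lt_or_ge k (m+d) with h2 | h2
    · have hd : k - m < d := by omega
      simp only [if_neg (by omega : ¬ k < m), if_pos hd, if_pos h2]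
      simp only [rename]
      congr 1; omega
    · simp only [if_neg (by omega : ¬ k < m), if_neg (by omega : ¬ k - m < d),
        if_neg (by omega : ¬ k < m + d)]
      rw [rename_rename]
      have h3 : k - m - d = k - (m+d) := by omega
      rw [h3]
      congr 1
      funext x; omega

lemma closedUnder_mono {d d' : ℕ} (hdd : d ≤ d') : ∀ e : Exp S, closedUnder d e → closedUnder d' e := by
  intro e
  induction e generalizing d d' with
  | var k => intro h; exact lt_of_lt_of_le h hdd
  | app u v ihu ihv => intro h; exact ⟨ihu hdd h.1, ihv hdd h.2⟩
  | lam u ih => intro h; exact ih (by omega) h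
  | constr T c args ih => intro h i; exact ih i hdd (h i)
  | seqE u v ihu ihv => intro h; exact ⟨ihu hdd h.1, ihv hdd h.2⟩
  | caseE T e alts ihe ih =>
    intro h; exact ⟨ihe hdd h.1, fun c => ih c (by omega) (h.2 c)⟩
  | letrecE n b t ihb iht =>
    intro h; exact ⟨fun i => ihb i (by omega) (h.1 i), iht (by omega) h.2⟩

lemma rename_closedUnder {d d' : ℕ} {f : ℕ → ℕ} (hf : ∀ k, k < d → f k < d') :
    ∀ e : Exp S, closedUnder d e → closedUnder d' (rename f e) := by
  intro e
  induction e generalizing d d' f with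
  | var k => intro h; exact hf k h
  | app u v ihu ihv => intro h; exact ⟨ihu hf h.1, ihv hf h.2⟩
  | lam u ih =>
    intro h
    refine ih (f := liftN 1 f) (d := d+1) ?_ h
    intro k hk; simp only [liftN]
    split
    · omega
    · have := hf (k-1) (by omega); omega
  | constr T c args ih => intro h i; exact ih i hf (h i)
  | seqE u v ihu ihv => intro h; exact ⟨ihu hf h.1, ihv hf h.2⟩
  | caseE T e alts ihe ih =>
    intro h
    refine ⟨ihe hf h.1, fun c => ih c (f := liftN (S.arity T c) f) (d := d + S.arity T c) ?_ (h.2 c)⟩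
    intro k hk; simp only [liftN]
    split
    · omega
    · have := hf (k - S.arity T c) (by omega); omega
  | letrecE n b t ihb iht =>
    intro h
    have harg : ∀ k, k < d + (n+1) → liftN (n+1) f k < d' + (n+1) := by
      intro k hk; simp only [liftN]
      split
      · omega
      · have := hf (k - (n+1)) (by omega); omega
    exact ⟨fun i => ihb i harg (h.1 i), iht harg h.2⟩

lemma subst_closedUnder {d m : ℕ} {σ : ℕ → Exp S} (hσ : ∀ k, k < m → closedUnder d (σ k)) :
    ∀ e : Exp S, closedUnder m e → closedUnder d (subst σ e) := by
  intro e
  induction e generalizing d m σ with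
  | var k => intro h; exact hσ k h
  | app u v ihu ihv => intro h; exact ⟨ihu hσ h.1, ihv hσ h.2⟩
  | lam u ih =>
    intro h
    refine ih (σ := upN 1 σ) (m := m+1) ?_ h
    intro k hk
    simp only [upN]
    split
    · simpa [closedUnder] using by omega
    · exact rename_closedUnder (fun j hj => by omega) _ (hσ (k-1) (by omega))
  | constr T c args ih => intro h i; exact ih i hσ (h i)
  | seqE u v ihu ihv => intro h; exact ⟨ihu hσ h.1, ihv hσ h.2⟩
  | caseE T e alts ihe ih =>
    intro h
    refine ⟨ihe hσ h.1, fun c => ih c (σ := upN (S.arity T c) σ) (m := m + S.arity T c) ?_ (h.2 c)⟩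
    intro k hk
    simp only [upN]
    split
    · simpa [closedUnder] using by omega
    · exact rename_closedUnder (fun j hj => by omega) _ (hσ (k - S.arity T c) (by omega))
  | letrecE n b t ihb iht =>
    intro h
    have harg : ∀ k, k < m + (n+1) → closedUnder (d + (n+1)) (upN (n+1) σ k) := by
      intro k hk
      simp only [upN]
      split
      · simpa [closedUnder] using by omega
      · exact rename_closedUnder (fun j hj => by omega) _ (hσ (k - (n+1)) (by omega))
    exact ⟨fun i => ihb i harg (h.1 i), iht harg h.2⟩

/-- renaming is the identity on expressions closed under `d` binders -/
lemma rename_closed_id : ∀ (e : Exp S) (d : ℕ) (f : ℕ → ℕ), (∀ k, k < d → f k = k) →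
    closedUnder d e → rename f e = e := by
  intro e
  induction e with
  | var k => intro d f hf h; simp [rename, hf k h]
  | app u v ihu ihv => intro d f hf h; simp [rename, ihu d f hf h.1, ihv d f hf h.2]
  | lam u ih =>
    intro d f hf h; simp only [rename]
    rw [ih (d+1) _ (by
      intro k hk; simp only [liftN]
      split
      · rfl
      · rw [hf (k-1) (by omega)]; omega) h]
  | constr T c args ih =>
    intro d f hf h; simp only [rename]; congr 1; funext i; exact ih i d f hf (h i)
  | seqE u v ihu ihv => intro d f hf h; simp [rename, ihu d f hf h.1, ihv d f hf h.2]
  | caseE T e alts ihe ih =>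
    intro d f hf h; simp only [rename, ihe d f hf h.1]
    congr 1; funext c
    refine ih c (d + S.arity T c) _ ?_ (h.2 c)
    intro k hk; simp only [liftN]
    split
    · rfl
    · rw [hf (k - S.arity T c) (by omega)]; omega
  | letrecE n b t ihb iht =>
    intro d f hf h; simp only [rename]
    have harg : ∀ k, k < d + (n+1) → liftN (n+1) f k = k := by
      intro k hk; simp only [liftN]
      split
      · rfl
      · rw [hf (k - (n+1)) (by omega)]; omega
    congr 1
    · funext i; exact ihb i _ _ harg (h.1 i)
    · exact iht _ _ harg h.2

lemma rename_closed {e : Exp S} (h : closed e) (f : ℕ → ℕ) : rename f e = e :=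
  rename_closed_id e 0 f (by omega) h

/-- substitution extensionality under a closedness bound -/
lemma subst_ext : ∀ (e : Exp S) (d : ℕ) (σ τ : ℕ → Exp S), (∀ k, k < d → σ k = τ k) →
    closedUnder d e → subst σ e = subst τ e := by
  intro e
  induction e with
  | var k => intro d σ τ hστ h; exact hστ k h
  | app u v ihu ihv => intro d σ τ hστ h; simp [subst, ihu d σ τ hστ h.1, ihv d σ τ hστ h.2]
  | lam u ih =>
    intro d σ τ hστ h; simp only [subst]
    rw [ih (d+1) (upN 1 σ) (upN 1 τ) (by
      intro k hk; simp only [upN]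
      split
      · rfl
      · rw [hστ (k-1) (by omega)]) h]
  | constr T c args ih =>
    intro d σ τ hστ h; simp only [subst]; congr 1; funext i; exact ih i d σ τ hστ (h i)
  | seqE u v ihu ihv => intro d σ τ hστ h; simp [subst, ihu d σ τ hστ h.1, ihv d σ τ hστ h.2]
  | caseE T e alts ihe ih =>
    intro d σ τ hστ h; simp only [subst, ihe d σ τ hστ h.1]
    congr 1; funext c
    refine ih c (d + S.arity T c) _ _ ?_ (h.2 c)
    intro k hk; simp only [upN]
    split
    · rfl
    · rw [hστ (k - S.arity T c) (by omega)]
  | letrecE n b t ihb iht =>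
    intro d σ τ hστ h; simp only [subst]
    have harg : ∀ k, k < d + (n+1) → upN (n+1) σ k = upN (n+1) τ k := by
      intro k hk; simp only [upN]
      split
      · rfl
      · rw [hστ (k - (n+1)) (by omega)]
    congr 1
    · funext i; exact ihb i _ _ _ harg (h.1 i)
    · exact iht _ _ _ harg h.2

/-- substitution is the identity on expressions closed under `d` binders -/
lemma subst_closed_id : ∀ (e : Exp S) (d : ℕ) (σ : ℕ → Exp S), (∀ k, k < d → σ k = .var k) →
    closedUnder d e → subst σ e = e := by
  intro e
  induction e with
  | var k => intro d σ hσ h; exact hσ k h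
  | app u v ihu ihv => intro d σ hσ h; simp [subst, ihu d σ hσ h.1, ihv d σ hσ h.2]
  | lam u ih =>
    intro d σ hσ h; simp only [subst]
    rw [ih (d+1) _ (by
      intro k hk; simp only [upN]
      split
      · rfl
      · rw [hσ (k-1) (by omega)]; simp [rename]; omega) h]
  | constr T c args ih =>
    intro d σ hσ h; simp only [subst]; congr 1; funext i; exact ih i d σ hσ (h i)
  | seqE u v ihu ihv => intro d σ hσ h; simp [subst, ihu d σ hσ h.1, ihv d σ hσ h.2]
  | caseE T e alts ihe ih =>
    intro d σ hσ h; simp only [subst, ihe d σ hσ h.1]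
    congr 1; funext c
    refine ih c (d + S.arity T c) _ ?_ (h.2 c)
    intro k hk; simp only [upN]
    split
    · rfl
    · rw [hσ (k - S.arity T c) (by omega)]; simp [rename]; omega
  | letrecE n b t ihb iht =>
    intro d σ hσ h; simp only [subst]
    have harg : ∀ k, k < d + (n+1) → upN (n+1) σ k = .var k := by
      intro k hk; simp only [upN]
      split
      · rfl
      · rw [hσ (k - (n+1)) (by omega)]; simp [rename]; omega
    congr 1
    · funext i; exact ihb i _ _ harg (h.1 i)
    · exact iht _ _ harg h.2

lemma subst_closed {e : Exp S} (h : closed e) (σ : ℕ → Exp S) : subst σ e = e :=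
  subst_closed_id e 0 σ (by omega) h

end Core
namespace Core

variable {S : Sig}

lemma upN_liftN (m : ℕ) (σ : ℕ → Exp S) (f : ℕ → ℕ) :
    (fun k => upN m σ (liftN m f k)) = upN m (fun k => σ (f k)) := by
  funext k
  simp only [liftN, upN]
  rcases lt_or_ge k m with h | h
  · simp [h]
  · simp only [if_neg (by omega : ¬ k < m), if_neg (by omega : ¬ f (k-m) + m < m)]
    have : f (k-m) + m - m = f (k-m) := by omega
    rw [this]

lemma subst_rename (e : Exp S) : ∀ (σ : ℕ → Exp S) (f : ℕ → ℕ),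
    subst σ (rename f e) = subst (fun k => σ (f k)) e := by
  induction e with
  | var k => intro σ f; rfl
  | app u v ihu ihv => intro σ f; simp [rename, subst, ihu, ihv]
  | lam u ih => intro σ f; simp only [rename, subst, ih, upN_liftN]
  | constr T c args ih => intro σ f; simp only [rename, subst]; congr 1; funext i; exact ih i σ f
  | seqE u v ihu ihv => intro σ f; simp [rename, subst, ihu, ihv]
  | caseE T e alts ihe ih =>
    intro σ f; simp only [rename, subst, ihe]
    congr 1; funext c; rw [ih c, upN_liftN]
  | letrecE n b t ihb iht =>
    intro σ f; simp only [rename, subst]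
    congr 1
    · funext i; rw [ihb i, upN_liftN]
    · rw [iht, upN_liftN]

lemma liftN_upN (m : ℕ) (f : ℕ → ℕ) (σ : ℕ → Exp S) :
    (fun k => rename (liftN m f) (upN m σ k)) = upN m (fun k => rename f (σ k)) := by
  funext k
  simp only [upN]
  rcases lt_or_ge k m with h | h
  · simp only [if_pos h, rename, liftN, if_pos h]
  · simp only [if_neg (by omega : ¬ k < m), rename_rename]
    congr 1
    funext x
    simp only [liftN, if_neg (by omega : ¬ x + m < m)]
    have : x + m - m = x := by omega
    rw [this]

lemma rename_subst (e : Exp S) : ∀ (f : ℕ → ℕ) (σ : ℕ → Exp S),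
    rename f (subst σ e) = subst (fun k => rename f (σ k)) e := by
  induction e with
  | var k => intro f σ; rfl
  | app u v ihu ihv => intro f σ; simp [rename, subst, ihu, ihv]
  | lam u ih => intro f σ; simp only [rename, subst, ih, liftN_upN]
  | constr T c args ih => intro f σ; simp only [rename, subst]; congr 1; funext i; exact ih i f σ
  | seqE u v ihu ihv => intro f σ; simp [rename, subst, ihu, ihv]
  | caseE T e alts ihe ih =>
    intro f σ; simp only [rename, subst, ihe]
    congr 1; funext c; rw [ih c, liftN_upN]
  | letrecE n b t ihb iht =>
    intro f σ; simp only [rename, subst]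
    congr 1
    · funext i; rw [ihb i, liftN_upN]
    · rw [iht, liftN_upN]

lemma upN_subst (m : ℕ) (ρ σ : ℕ → Exp S) :
    (fun k => subst (upN m ρ) (upN m σ k)) = upN m (fun k => subst ρ (σ k)) := by
  funext k
  simp only [upN]
  rcases lt_or_ge k m with h | h
  · simp only [if_pos h, subst, upN, if_pos h]
  · simp only [if_neg (by omega : ¬ k < m), subst_rename, rename_subst]
    congr 1
    funext x
    simp only [upN, if_neg (by omega : ¬ x + m < m)]
    have : x + m - m = x := by omega
    rw [this]

lemma subst_subst (e : Exp S) : ∀ (ρ σ : ℕ → Exp S),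
    subst ρ (subst σ e) = subst (fun k => subst ρ (σ k)) e := by
  induction e with
  | var k => intro ρ σ; rfl
  | app u v ihu ihv => intro ρ σ; simp [subst, ihu, ihv]
  | lam u ih => intro ρ σ; simp only [subst, ih, upN_subst]
  | constr T c args ih => intro ρ σ; simp only [subst]; congr 1; funext i; exact ih i ρ σ
  | seqE u v ihu ihv => intro ρ σ; simp [subst, ihu, ihv]
  | caseE T e alts ihe ih =>
    intro ρ σ; simp only [subst, ihe]
    congr 1; funext c; rw [ih c, upN_subst]
  | letrecE n b t ihb iht =>
    intro ρ σ; simp only [subst]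
    congr 1
    · funext i; rw [ihb i, upN_subst]
    · rw [iht, upN_subst]

/-! ### lfree preservation -/

lemma lfree_rename : ∀ (e : Exp S), lfree e → ∀ f, lfree (rename f e) := by
  intro e
  induction e with
  | var k => intro h f; trivial
  | app u v ihu ihv => intro h f; exact ⟨ihu h.1 _, ihv h.2 _⟩
  | lam u ih => intro h f; exact ih h _
  | constr T c args ih => intro h f i; exact ih i (h i) _
  | seqE u v ihu ihv => intro h f; exact ⟨ihu h.1 _, ihv h.2 _⟩
  | caseE T e alts ihe ih => intro h f; exact ⟨ihe h.1 _, fun c => ih c (h.2 c) _⟩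
  | letrecE n b t ihb iht => intro h; exact absurd h id

lemma lfree_subst : ∀ (e : Exp S), lfree e → ∀ σ : ℕ → Exp S, (∀ k, lfree (σ k)) →
    lfree (subst σ e) := by
  intro e
  induction e with
  | var k => intro h σ hσ; exact hσ k
  | app u v ihu ihv => intro h σ hσ; exact ⟨ihu h.1 σ hσ, ihv h.2 σ hσ⟩
  | lam u ih =>
    intro h σ hσ
    refine ih h (upN 1 σ) ?_
    intro k; simp only [upN]
    split
    · trivial
    · exact lfree_rename _ (hσ _) _
  | constr T c args ih => intro h σ hσ i; exact ih i (h i) σ hσ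
  | seqE u v ihu ihv => intro h σ hσ; exact ⟨ihu h.1 σ hσ, ihv h.2 σ hσ⟩
  | caseE T e alts ihe ih =>
    intro h σ hσ
    refine ⟨ihe h.1 σ hσ, fun c => ih c (h.2 c) (upN (S.arity T c) σ) ?_⟩
    intro k; simp only [upN]
    split
    · trivial
    · exact lfree_rename _ (hσ _) _
  | letrecE n b t ihb iht => intro h; exact absurd h id

/-! ### Omega -/

lemma Omega_closed : closed (Omega : Exp S) := by
  simp [Omega, closed, closedUnder]

lemma Omega_lfree : lfree (Omega : Exp S) := by
  simp [Omega, lfree]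

lemma Omega_not_value : ¬ isValue (Omega : Exp S) := by
  simp [Omega, isValue]

lemma Omega_base : LccBase (Omega : Exp S) Omega := by
  have h := @LccBase.nbeta S (.app (.var 0) (.var 0)) (.lam (.app (.var 0) (.var 0)))
  simpa [subst, consSub, Omega] using h

/-- closing substitution by `Ω` -/
lemma subst_omega_closed : ∀ (e : Exp S) (d : ℕ),
    closedUnder d (subst (upN d (fun _ => Omega)) e) := by
  intro e
  induction e with
  | var k =>
    intro d
    show closedUnder d (upN d (fun _ => Omega) k)
    simp only [upN]
    split
    · next h => simpa [closedUnder] using h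
    · rw [rename_closed Omega_closed]
      exact closedUnder_mono (by omega) _ Omega_closed
  | app u v ihu ihv => intro d; exact ⟨ihu d, ihv d⟩
  | lam u ih =>
    intro d
    show closedUnder (d+1) (subst (upN 1 (upN d fun _ => Omega)) u)
    rw [upN_upN, show 1 + d = d + 1 by omega]
    exact ih (d+1)
  | constr T c args ih => intro d i; exact ih i d
  | seqE u v ihu ihv => intro d; exact ⟨ihu d, ihv d⟩
  | caseE T e alts ihe ih =>
    intro d
    refine ⟨ihe d, fun c => ?_⟩
    show closedUnder (d + S.arity T c)
      (subst (upN (S.arity T c) (upN d fun _ => Omega)) (alts c))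
    rw [upN_upN, show S.arity T c + d = d + S.arity T c by omega]
    exact ih c _
  | letrecE n b t ihb iht =>
    intro d
    constructor
    · intro i
      show closedUnder (d + (n+1)) (subst (upN (n+1) (upN d fun _ => Omega)) (b i))
      rw [upN_upN, show (n+1) + d = d + (n+1) by omega]
      exact ihb i _
    · show closedUnder (d + (n+1)) (subst (upN (n+1) (upN d fun _ => Omega)) t)
      rw [upN_upN, show (n+1) + d = d + (n+1) by omega]
      exact iht _

lemma upN_zero (σ : ℕ → Exp S) : upN 0 σ = σ := by
  funext k
  simp only [upN, if_neg (by omega : ¬ k < 0)]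
  exact rename_id _ _ (fun k => rfl)

lemma closed_subst_omega (e : Exp S) : closed (subst (fun _ => Omega) e) := by
  have := subst_omega_closed e 0
  rwa [upN_zero] at this

end Core
namespace Core

variable {S : Sig}

/-! ### Reduction context machinery -/

/-- composition of `A`-contexts -/
def compA : ACtx S → ACtx S → ACtx S
  | .hole, B => B
  | .appA A t, B => .appA (compA A B) t
  | .seqA A t, B => .seqA (compA A B) t
  | .caseA T A alts, B => .caseA T (compA A B) alts

lemma plugA_compA (A B : ACtx S) (e : Exp S) :
    plugA (compA A B) e = plugA A (plugA B e) := by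
  induction A with
  | hole => rfl
  | appA A t ih => simp [compA, plugA, ih]
  | seqA A t ih => simp [compA, plugA, ih]
  | caseA T A alts ih => simp [compA, plugA, ih]

lemma plugA_closed (A : ACtx S) (e : Exp S) (h : closed (plugA A e)) :
    closed e ∧ ∀ e', closed e' → closed (plugA A e') := by
  induction A generalizing e with
  | hole => exact ⟨h, fun e' h' => h'⟩
  | appA A t ih =>
    obtain ⟨h1, h2⟩ := h
    obtain ⟨he, hA⟩ := ih e h1
    exact ⟨he, fun e' h' => ⟨hA e' h', h2⟩⟩
  | seqA A t ih =>
    obtain ⟨h1, h2⟩ := h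
    obtain ⟨he, hA⟩ := ih e h1
    exact ⟨he, fun e' h' => ⟨hA e' h', h2⟩⟩
  | caseA T A alts ih =>
    obtain ⟨h1, h2⟩ := h
    obtain ⟨he, hA⟩ := ih e h1
    exact ⟨he, fun e' h' => ⟨hA e' h', h2⟩⟩

lemma isValue_plugA {A : ACtx S} {e : Exp S} (h : isValue (plugA A e)) : A = .hole := by
  cases A <;> simp [plugA, isValue] at h ⊢

lemma LccBase_not_value {r r' : Exp S} (h : LccBase r r') : ¬ isValue r := by
  cases h <;> simp [isValue]

lemma plugA_eq_lam {A : ACtx S} {e u : Exp S} (h : plugA A e = .lam u) :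
    A = .hole ∧ e = .lam u := by
  cases A <;> simp [plugA] at h ⊢ <;> exact h

lemma plugA_eq_constr {A : ACtx S} {e : Exp S} {T c args} (h : plugA A e = .constr T c args) :
    A = .hole ∧ e = .constr T c args := by
  cases A <;> simp [plugA] at h ⊢
  exact h

lemma plugA_value {A : ACtx S} {e : Exp S} (hv : isValue (plugA A e)) :
    A = .hole ∧ isValue e := by
  have := isValue_plugA hv
  subst this
  exact ⟨rfl, hv⟩

/-- no basic rule applies to a value -/
lemma no_base_of_value {v r' : Exp S} (hv : isValue v) (h : LccBase v r') : False :=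
  LccBase_not_value h hv

/-- no basic rule applies inside a lambda/constructor spine position -/
lemma decomp_unique {A A' : ACtx S} {r r' r1 r1' : Exp S}
    (hb : LccBase r r1) (hb' : LccBase r' r1') :
    plugA A r = plugA A' r' → A = A' ∧ r = r' := by
  induction A generalizing A' with
  | hole =>
    cases A' with
    | hole => intro h; exact ⟨rfl, h⟩
    | appA A'' t =>
      intro h
      simp only [plugA] at h
      exfalso
      cases hb with
      | nbeta =>
        obtain ⟨h1, h2⟩ := Exp.app.inj h
        obtain ⟨hA, he⟩ := plugA_eq_lam h1.symm
        subst hA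
        simp only [plugA] at h1
        exact no_base_of_value (by rw [← h1]; simp [isValue]) hb'
      | nseq hv => cases h
      | ncase => cases h
    | seqA A'' t =>
      intro h
      simp only [plugA] at h
      exfalso
      cases hb with
      | nbeta => cases h
      | nseq hv =>
        obtain ⟨h1, h2⟩ := Exp.seqE.inj h
        rw [h1] at hv
        obtain ⟨hA, hvv⟩ := plugA_value hv
        subst hA
        exact no_base_of_value hvv hb'
      | ncase => cases h
    | caseA T A'' alts =>
      intro h
      simp only [plugA] at h
      exfalso
      cases hb with
      | nbeta => cases h
      | nseq hv => cases h
      | ncase =>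
        obtain ⟨hT, h1, h2⟩ := Exp.caseE.inj h
        subst hT
        obtain ⟨hA, he⟩ := plugA_eq_constr h1.symm
        subst hA
        simp only [plugA] at h1
        exact no_base_of_value (by rw [← h1]; simp [isValue]) hb'
  | appA A1 t ih =>
    cases A' with
    | hole =>
      intro h
      simp only [plugA] at h
      exfalso
      cases hb' with
      | nbeta =>
        obtain ⟨h1, h2⟩ := Exp.app.inj h
        obtain ⟨hA, he⟩ := plugA_eq_lam h1
        subst hA
        simp only [plugA] at h1
        exact no_base_of_value (by rw [h1]; simp [isValue]) hb
      | nseq hv => cases h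
      | ncase => cases h
    | appA A1' t' =>
      intro h
      simp only [plugA] at h
      obtain ⟨h1, h2⟩ := Exp.app.inj h
      obtain ⟨hA, hr⟩ := ih h1
      subst hA h2; exact ⟨rfl, hr⟩
    | seqA A1' t' => intro h; cases h
    | caseA T A1' alts => intro h; cases h
  | seqA A1 t ih =>
    cases A' with
    | hole =>
      intro h
      simp only [plugA] at h
      exfalso
      cases hb' with
      | nbeta => cases h
      | nseq hv =>
        obtain ⟨h1, h2⟩ := Exp.seqE.inj h
        rw [← h1] at hv
        obtain ⟨hA, hvv⟩ := plugA_value hv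
        subst hA
        exact no_base_of_value hvv hb
      | ncase => cases h
    | appA A1' t' => intro h; cases h
    | seqA A1' t' =>
      intro h
      simp only [plugA] at h
      obtain ⟨h1, h2⟩ := Exp.seqE.inj h
      obtain ⟨hA, hr⟩ := ih h1
      subst hA h2; exact ⟨rfl, hr⟩
    | caseA T A1' alts => intro h; cases h
  | caseA T A1 alts ih =>
    cases A' with
    | hole =>
      intro h
      simp only [plugA] at h
      exfalso
      cases hb' with
      | nbeta => cases h
      | nseq hv => cases h
      | ncase =>
        obtain ⟨hT, h1, h2⟩ := Exp.caseE.inj h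
        subst hT
        obtain ⟨hA, he⟩ := plugA_eq_constr h1
        subst hA
        exact no_base_of_value (by rw [he]; simp [isValue]) hb
    | appA A1' t' => intro h; cases h
    | seqA A1' t' => intro h; cases h
    | caseA T' A1' alts' =>
      intro h
      simp only [plugA] at h
      obtain ⟨hT, h1, h2⟩ := Exp.caseE.inj h
      subst hT
      obtain ⟨hA, hr⟩ := ih h1
      subst hA
      rw [eq_of_heq h2]
      exact ⟨rfl, hr⟩

end Core
namespace Core

variable {S : Sig}

/-- determinism of the basic rules -/
lemma base_det {r a b : Exp S} (h1 : LccBase r a) (h2 : LccBase r b) : a = b := by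
  cases h1 with
  | nbeta => cases h2 with | nbeta => rfl
  | nseq hv => cases h2 with | nseq hv' => rfl
  | ncase => cases h2 with | ncase => rfl

/-- determinism of normal-order reduction -/
lemma lccStep_det {s a b : Exp S} (h1 : lccStep s a) (h2 : lccStep s b) : a = b := by
  obtain ⟨A, r, r', hb, rfl, rfl⟩ := h1
  obtain ⟨A', q, q', hb', hq, rfl⟩ := h2
  obtain ⟨hA, hr⟩ := decomp_unique hb hb' hq
  subst hA hr
  rw [base_det hb hb']

/-- values do not reduce -/
lemma value_no_step {v t : Exp S} (hv : isValue v) (h : lccStep v t) : False := by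
  obtain ⟨A, r, r', hb, rfl, rfl⟩ := h
  obtain ⟨hA, hvr⟩ := plugA_value hv
  subst hA
  exact no_base_of_value hvr hb

/-- lifting a step through a reduction context -/
lemma lccStep_plugA {x y : Exp S} (A : ACtx S) (h : lccStep x y) :
    lccStep (plugA A x) (plugA A y) := by
  obtain ⟨B, r, r', hb, rfl, rfl⟩ := h
  exact ⟨compA A B, r, r', hb, (plugA_compA ..).symm, (plugA_compA ..).symm⟩

lemma lccSteps_plugA {x y : Exp S} (A : ACtx S) (h : Relation.ReflTransGen lccStep x y) :
    Relation.ReflTransGen lccStep (plugA A x) (plugA A y) := by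
  induction h with
  | refl => exact .refl
  | tail _ h ih => exact ih.tail (lccStep_plugA A h)

/-- convergence is preserved backwards along reduction -/
lemma lccConv_of_steps {x y : Exp S} (h : Relation.ReflTransGen lccStep x y)
    (hc : lccConv y) : lccConv x := by
  obtain ⟨v, hs, hv⟩ := hc
  exact ⟨v, h.trans hs, hv⟩

/-- convergence is preserved forwards along deterministic reduction -/
lemma lccConv_step {x y : Exp S} (h : lccStep x y) (hc : lccConv x) : lccConv y := by
  obtain ⟨v, hs, hv⟩ := hc
  cases hs.cases_head with
  | inl he => subst he; exact absurd h (fun h => value_no_step hv h)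
  | inr he =>
    obtain ⟨z, hxz, hzv⟩ := he
    rw [lccStep_det h hxz]
    exact ⟨v, hzv, hv⟩

lemma lccConv_steps {x y : Exp S} (h : Relation.ReflTransGen lccStep x y)
    (hc : lccConv x) : lccConv y := by
  induction h with
  | refl => exact hc
  | tail _ h ih => exact lccConv_step h ih

/-- unique normal forms -/
lemma value_unique {x v w : Exp S} (h1 : Relation.ReflTransGen lccStep x v) (hv : isValue v)
    (h2 : Relation.ReflTransGen lccStep x w) (hw : isValue w) : v = w := by
  induction h1 using Relation.ReflTransGen.head_induction_on with
  | refl =>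
    cases h2.cases_head with
    | inl he => exact he
    | inr he => exact absurd he.choose_spec.1 (fun h => value_no_step hv h)
  | head hstep _ ih =>
    rename_i x' y' _
    cases h2.cases_head with
    | inl he => subst he; exact absurd hstep (fun h => value_no_step hw h)
    | inr he =>
      obtain ⟨z, hxz, hzw⟩ := he
      rw [lccStep_det hstep hxz] at *
      exact ih hzw

/-- closedness is preserved by basic reduction -/
lemma base_closed {r r' : Exp S} (h : LccBase r r') (hc : closed r) : closed r' := by
  cases h with
  | nbeta =>
    obtain ⟨h1, h2⟩ := hc
    refine subst_closedUnder ?_ _ h1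
    intro k hk
    interval_cases k
    · exact h2
  | nseq hv => exact hc.2
  | ncase =>
    obtain ⟨h1, h2⟩ := hc
    rename_i T c args alts
    refine subst_closedUnder ?_ _ (show closedUnder (S.arity T c) (alts c) by
      have := h2 c; rwa [Nat.zero_add] at this)
    intro k hk
    simp only [instSub, dif_pos hk]
    exact h1 _

/-- closedness is preserved by normal-order reduction -/
lemma lccStep_closed {s t : Exp S} (h : lccStep s t) (hc : closed s) : closed t := by
  obtain ⟨A, r, r', hb, rfl, rfl⟩ := h
  obtain ⟨hr, hA⟩ := plugA_closed A r hc
  exact hA _ (base_closed hb hr)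

lemma lccSteps_closed {s t : Exp S} (h : Relation.ReflTransGen lccStep s t) (hc : closed s) :
    closed t := by
  induction h with
  | refl => exact hc
  | tail _ h ih => exact lccStep_closed h ih

/-- Omega only reduces to itself -/
lemma Omega_step {t : Exp S} (h : lccStep Omega t) : t = Omega := by
  have h0 : lccStep (Omega : Exp S) Omega := ⟨.hole, Omega, Omega, Omega_base, rfl, rfl⟩
  exact lccStep_det h h0

lemma Omega_plugA {B : ACtx S} {r r' : Exp S} (hb : LccBase r r')
    (h : plugA B r = Omega) : B = .hole ∧ r = Omega ∧ r' = Omega := by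
  have h' : plugA B r = plugA .hole Omega := h
  obtain ⟨hB, hr⟩ := decomp_unique hb Omega_base h'
  subst hB
  refine ⟨rfl, hr, ?_⟩
  subst hr
  exact base_det hb Omega_base

lemma Omega_steps {v : Exp S} (hs : Relation.ReflTransGen lccStep Omega v) : v = Omega := by
  induction hs with
  | refl => rfl
  | tail _ hstep ih =>
    subst ih
    exact Omega_step hstep

/-- Omega diverges -/
lemma Omega_div : ¬ lccConv (Omega : Exp S) := by
  rintro ⟨v, hs, hv⟩
  rw [Omega_steps hs] at hv
  exact Omega_not_value hv

/-- stuck expressions diverge -/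
lemma stuck_div {s : Exp S} (hnv : ¬ isValue s) (hns : ∀ t, ¬ lccStep s t) :
    ¬ lccConv s := by
  rintro ⟨v, hs, hv⟩
  cases hs.cases_head with
  | inl he => subst he; exact hnv hv
  | inr he => exact hns _ he.choose_spec.1

end Core
namespace Core

variable {S : Sig}

/-- a normal-order redex inside `plugA A e` is inside `e` unless `e` is a value -/
lemma redex_in_or_value {A A' : ACtx S} {e r r' : Exp S} (hb : LccBase r r')
    (h : plugA A e = plugA A' r) :
    (∃ A2, A' = compA A A2 ∧ e = plugA A2 r) ∨ isValue e := by
  induction A generalizing A' with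
  | hole => exact .inl ⟨A', rfl, h⟩
  | appA A1 t ih =>
    cases A' with
    | hole =>
      simp only [plugA] at h
      right
      generalize hq : plugA A1 e = q at h
      subst h
      cases hb with
      | nbeta =>
        obtain ⟨hA, he⟩ := plugA_eq_lam hq
        rw [he]; simp [isValue]
    | appA A1' t' =>
      simp only [plugA] at h
      obtain ⟨h1, h2⟩ := Exp.app.inj h
      rcases ih h1 with ⟨A2, rfl, he⟩ | hv
      · subst h2; exact .inl ⟨A2, rfl, he⟩
      · exact .inr hv
    | seqA A1' t' => cases h
    | caseA T A1' alts => cases h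
  | seqA A1 t ih =>
    cases A' with
    | hole =>
      simp only [plugA] at h
      cases hb with
      | nbeta => cases h
      | nseq hv =>
        obtain ⟨h1, h2⟩ := Exp.seqE.inj h
        rw [← h1] at hv
        obtain ⟨hA, hvv⟩ := plugA_value hv
        exact .inr hvv
      | ncase => cases h
    | appA A1' t' => cases h
    | seqA A1' t' =>
      simp only [plugA] at h
      obtain ⟨h1, h2⟩ := Exp.seqE.inj h
      rcases ih h1 with ⟨A2, rfl, he⟩ | hv
      · subst h2; exact .inl ⟨A2, rfl, he⟩
      · exact .inr hv
    | caseA T A1' alts => cases h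
  | caseA T A1 alts ih =>
    cases A' with
    | hole =>
      simp only [plugA] at h
      cases hb with
      | nbeta => cases h
      | nseq hv => cases h
      | ncase =>
        obtain ⟨hT, h1, h2⟩ := Exp.caseE.inj h
        subst hT
        obtain ⟨hA, he⟩ := plugA_eq_constr h1
        rw [he]; right; simp [isValue]
    | appA A1' t' => cases h
    | seqA A1' t' => cases h
    | caseA T' A1' alts' =>
      simp only [plugA] at h
      obtain ⟨hT, h1, h2⟩ := Exp.caseE.inj h
      subst hT
      rw [eq_of_heq h2]
      rcases ih h1 with ⟨A2, rfl, he⟩ | hv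
      · exact .inl ⟨A2, rfl, he⟩
      · exact .inr hv

lemma plugA_conv_aux {x v : Exp S} (hs : Relation.ReflTransGen lccStep x v) (hv : isValue v) :
    ∀ (A : ACtx S) (e : Exp S), x = plugA A e →
    ∃ w, Relation.ReflTransGen lccStep e w ∧ isValue w ∧ lccConv (plugA A w) := by
  induction hs using Relation.ReflTransGen.head_induction_on with
  | refl =>
    intro A e he
    subst he
    obtain ⟨hA, hve⟩ := plugA_value hv
    subst hA
    exact ⟨e, .refl, hve, e, .refl, hv⟩
  | @head x y hstep hrest ih =>
    intro A e he
    subst he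
    by_cases hve : isValue e
    · exact ⟨e, .refl, hve, v, Relation.ReflTransGen.head hstep hrest, hv⟩
    · obtain ⟨A', r, r', hb, hx, rfl⟩ := hstep
      rcases redex_in_or_value hb hx with ⟨A2, rfl, hee⟩ | hveV
      · subst hee
        obtain ⟨w, hw1, hw2, hw3⟩ := ih A (plugA A2 r') (plugA_compA A A2 r')
        exact ⟨w, .head ⟨A2, r, r', hb, rfl, rfl⟩ hw1, hw2, hw3⟩
      · exact absurd hveV hve

/-- if `plugA A e` converges, then `e` converges to a value `w` and `plugA A w` converges -/
lemma plugA_conv {A : ACtx S} {e : Exp S} (h : lccConv (plugA A e)) :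
    ∃ w, Relation.ReflTransGen lccStep e w ∧ isValue w ∧ lccConv (plugA A w) := by
  obtain ⟨v, hs, hv⟩ := h
  exact plugA_conv_aux hs hv A e rfl

end Core
namespace Core

variable {S : Sig}

/-- congruence closure of a relation on expressions -/
inductive Sim (P : Exp S → Exp S → Prop) : Exp S → Exp S → Prop where
  | base {x y} : P x y → Sim P x y
  | var (k) : Sim P (.var k) (.var k)
  | app {u u' v v'} : Sim P u u' → Sim P v v' → Sim P (.app u v) (.app u' v')
  | lam {u u'} : Sim P u u' → Sim P (.lam u) (.lam u')
  | constr {T c args args'} : (∀ i, Sim P (args i) (args' i)) →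
      Sim P (.constr T c args) (.constr T c args')
  | seqE {u u' v v'} : Sim P u u' → Sim P v v' → Sim P (.seqE u v) (.seqE u' v')
  | caseE {T e e' alts alts'} : Sim P e e' → (∀ c, Sim P (alts c) (alts' c)) →
      Sim P (.caseE T e alts) (.caseE T e' alts')
  | letrecE {n b b' t t'} : (∀ i, Sim P (b i) (b' i)) → Sim P t t' →
      Sim P (.letrecE n b t) (.letrecE n b' t')

lemma Sim_refl (P : Exp S → Exp S → Prop) : ∀ e : Exp S, Sim P e e := by
  intro e
  induction e with
  | var k => exact .var k
  | app u v ihu ihv => exact .app ihu ihv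
  | lam u ih => exact .lam ih
  | constr T c args ih => exact .constr ih
  | seqE u v ihu ihv => exact .seqE ihu ihv
  | caseE T e alts ihe ih => exact .caseE ihe ih
  | letrecE n b t ihb iht => exact .letrecE ihb iht

/-- conditions on a base pair relation making the congruence closure a bisimulation
for convergence -/
structure GoodPair (P : Exp S → Exp S → Prop) : Prop where
  cl : ∀ x y, P x y → closed x ∧ closed y
  nv : ∀ x y, P x y → ¬ isValue x
  fwd : ∀ x y, P x y → ∀ (A : ACtx S) r r', x = plugA A r → LccBase r r' →
        ∃ y', Relation.ReflTransGen lccStep y y' ∧ Sim P (plugA A r') y'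
  bwd : ∀ x y, P x y → ∀ (B : ACtx S) r r', y = plugA B r → LccBase r r' →
        ∃ x', Relation.ReflTransGen lccStep x x' ∧ Sim P x' (plugA B r')
  val : ∀ x y, P x y → isValue y → Relation.ReflTransGen lccStep x y

variable {P : Exp S → Exp S → Prop}

lemma Sim_rename (hP : ∀ x y, P x y → closed x ∧ closed y) {a b : Exp S}
    (h : Sim P a b) : ∀ f, Sim P (rename f a) (rename f b) := by
  induction h with
  | base hp =>
    intro f
    rw [rename_closed (hP _ _ hp).1, rename_closed (hP _ _ hp).2]
    exact .base hp
  | var k => intro f; exact .var _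
  | app _ _ ihu ihv => intro f; exact .app (ihu f) (ihv f)
  | lam _ ih => intro f; exact .lam (ih _)
  | constr _ ih => intro f; exact .constr (fun i => ih i _)
  | seqE _ _ ihu ihv => intro f; exact .seqE (ihu f) (ihv f)
  | caseE _ _ ihe ih => intro f; exact .caseE (ihe _) (fun c => ih c _)
  | letrecE _ _ ihb iht => intro f; exact .letrecE (fun i => ihb i _) (iht _)

lemma Sim_upN (hP : ∀ x y, P x y → closed x ∧ closed y) {σ τ : ℕ → Exp S}
    (h : ∀ k, Sim P (σ k) (τ k)) (m : ℕ) : ∀ k, Sim P (upN m σ k) (upN m τ k) := by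
  intro k
  simp only [upN]
  split
  · exact .var _
  · exact Sim_rename hP (h _) _

lemma Sim_subst (hP : ∀ x y, P x y → closed x ∧ closed y) {a b : Exp S}
    (h : Sim P a b) : ∀ σ τ, (∀ k, Sim P (σ k) (τ k)) →
    Sim P (subst σ a) (subst τ b) := by
  induction h with
  | base hp =>
    intro σ τ hστ
    rw [subst_closed (hP _ _ hp).1, subst_closed (hP _ _ hp).2]
    exact .base hp
  | var k => intro σ τ hστ; exact hστ k
  | app _ _ ihu ihv => intro σ τ hστ; exact .app (ihu _ _ hστ) (ihv _ _ hστ)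
  | lam _ ih => intro σ τ hστ; exact .lam (ih _ _ (Sim_upN hP hστ 1))
  | constr _ ih => intro σ τ hστ; exact .constr (fun i => ih i _ _ hστ)
  | seqE _ _ ihu ihv => intro σ τ hστ; exact .seqE (ihu _ _ hστ) (ihv _ _ hστ)
  | caseE _ _ ihe ih =>
    intro σ τ hστ
    exact .caseE (ihe _ _ hστ) (fun c => ih c _ _ (Sim_upN hP hστ _))
  | letrecE _ _ ihb iht =>
    intro σ τ hστ
    exact .letrecE (fun i => ihb i _ _ (Sim_upN hP hστ _)) (iht _ _ (Sim_upN hP hστ _))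

lemma Sim_consSub {w w' : Exp S} (h : Sim P w w') :
    ∀ k, Sim P (consSub w k) (consSub w' k) := by
  intro k
  cases k with
  | zero => exact h
  | succ k => exact .var _

lemma Sim_instSub {m : ℕ} {args args' : Fin m → Exp S} (h : ∀ i, Sim P (args i) (args' i)) :
    ∀ k, Sim P (instSub args k) (instSub args' k) := by
  intro k
  simp only [instSub]
  split
  · exact h _
  · exact .var _

lemma Sim_value_right (hG : GoodPair P) {u u' : Exp S} (h : Sim P u u') (hv : isValue u) :
    isValue u' := by
  cases h with
  | base hp => exact absurd hv (hG.nv _ _ hp)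
  | lam _ => simp [isValue]
  | constr _ => simp [isValue]
  | var k => simp [isValue] at hv
  | app _ _ => simp [isValue] at hv
  | seqE _ _ => simp [isValue] at hv
  | caseE _ _ => simp [isValue] at hv
  | letrecE _ _ => simp [isValue] at hv

lemma Sim_value_bwd (hG : GoodPair P) {x v' : Exp S} (hs : Sim P x v') (hv : isValue v') :
    ∃ x', Relation.ReflTransGen lccStep x x' ∧ isValue x' ∧ Sim P x' v' := by
  cases hs with
  | base hp => exact ⟨v', hG.val _ _ hp hv, hv, Sim_refl P v'⟩
  | lam h => exact ⟨_, .refl, by simp [isValue], .lam h⟩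
  | constr h => exact ⟨_, .refl, by simp [isValue], .constr h⟩
  | var k => simp [isValue] at hv
  | app _ _ => simp [isValue] at hv
  | seqE _ _ => simp [isValue] at hv
  | caseE _ _ => simp [isValue] at hv
  | letrecE _ _ => simp [isValue] at hv

lemma Sim_lam_bwd (hG : GoodPair P) {u u0' : Exp S} (hs : Sim P u (.lam u0')) :
    ∃ u0, Relation.ReflTransGen lccStep u (.lam u0) ∧ Sim P u0 u0' := by
  cases hs with
  | base hp => exact ⟨u0', hG.val _ _ hp (by simp [isValue]), Sim_refl P u0'⟩
  | lam h => exact ⟨_, .refl, h⟩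

lemma Sim_constr_bwd (hG : GoodPair P) {u : Exp S} {T c args'}
    (hs : Sim P u (.constr T c args')) :
    ∃ args, Relation.ReflTransGen lccStep u (.constr T c args) ∧
      ∀ i, Sim P (args i) (args' i) := by
  cases hs with
  | base hp => exact ⟨args', hG.val _ _ hp (by simp [isValue]), fun i => Sim_refl P _⟩
  | constr h => exact ⟨_, .refl, h⟩

/-- forward simulation of one normal-order step -/
lemma Sim_fwd_step (hG : GoodPair P) {r r' : Exp S} (hb : LccBase r r') :
    ∀ (A : ACtx S) (b : Exp S), Sim P (plugA A r) b →
    ∃ b', Relation.ReflTransGen lccStep b b' ∧ Sim P (plugA A r') b' := by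
  intro A
  induction A with
  | hole =>
    intro b hsim
    simp only [plugA] at hsim ⊢
    cases hsim with
    | base hp => exact hG.fwd _ _ hp .hole _ _ rfl hb
    | app hsu hsv =>
      cases hb with
      | nbeta =>
        cases hsu with
        | base hp => exact absurd (by simp [isValue]) (hG.nv _ _ hp)
        | lam hs0 =>
          exact ⟨_, .head ⟨.hole, _, _, .nbeta, rfl, rfl⟩ .refl,
            Sim_subst hG.cl hs0 _ _ (Sim_consSub hsv)⟩
    | seqE hsu hsv =>
      cases hb with
      | nseq hv =>
        have hv' := Sim_value_right hG hsu hv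
        exact ⟨_, .head ⟨.hole, _, _, .nseq hv', rfl, rfl⟩ .refl, hsv⟩
    | caseE hse hsalts =>
      cases hb with
      | ncase =>
        cases hse with
        | base hp => exact absurd (by simp [isValue]) (hG.nv _ _ hp)
        | constr hargs =>
          exact ⟨_, .head ⟨.hole, _, _, .ncase, rfl, rfl⟩ .refl,
            Sim_subst hG.cl (hsalts _) _ _ (Sim_instSub hargs)⟩
    | var k => cases hb
    | lam _ => cases hb
    | constr _ => cases hb
    | letrecE _ _ => cases hb
  | appA A1 w ih =>
    intro b hsim
    cases hsim with
    | base hp => exact hG.fwd _ _ hp (.appA A1 w) _ _ rfl hb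
    | app hsu hsv =>
      obtain ⟨b1', hsteps, hsim'⟩ := ih _ hsu
      exact ⟨.app b1' _, lccSteps_plugA (.appA .hole _) hsteps, .app hsim' hsv⟩
  | seqA A1 w ih =>
    intro b hsim
    cases hsim with
    | base hp => exact hG.fwd _ _ hp (.seqA A1 w) _ _ rfl hb
    | seqE hsu hsv =>
      obtain ⟨b1', hsteps, hsim'⟩ := ih _ hsu
      exact ⟨.seqE b1' _, lccSteps_plugA (.seqA .hole _) hsteps, .seqE hsim' hsv⟩
  | caseA T A1 alts ih =>
    intro b hsim
    cases hsim with
    | base hp => exact hG.fwd _ _ hp (.caseA T A1 alts) _ _ rfl hb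
    | caseE hse hsalts =>
      obtain ⟨b1', hsteps, hsim'⟩ := ih _ hse
      exact ⟨.caseE T b1' _, lccSteps_plugA (.caseA T .hole _) hsteps, .caseE hsim' hsalts⟩

/-- backward simulation of one normal-order step -/
lemma Sim_bwd_step (hG : GoodPair P) {r r' : Exp S} (hb : LccBase r r') :
    ∀ (B : ACtx S) (a : Exp S), Sim P a (plugA B r) →
    ∃ a', Relation.ReflTransGen lccStep a a' ∧ Sim P a' (plugA B r') := by
  intro B
  induction B with
  | hole =>
    intro a hsim
    simp only [plugA] at hsim ⊢
    cases hb with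
    | nbeta =>
      cases hsim with
      | base hp => exact hG.bwd _ _ hp .hole _ _ rfl .nbeta
      | app hsu hsv =>
        obtain ⟨u0, hsteps, hs0⟩ := Sim_lam_bwd hG hsu
        refine ⟨_, ?_, Sim_subst hG.cl hs0 _ _ (Sim_consSub hsv)⟩
        exact (lccSteps_plugA (.appA .hole _) hsteps).tail ⟨.hole, _, _, .nbeta, rfl, rfl⟩
    | nseq hv =>
      cases hsim with
      | base hp => exact hG.bwd _ _ hp .hole _ _ rfl (.nseq hv)
      | seqE hsu hsv =>
        obtain ⟨x', hsteps, hx', hsim'⟩ := Sim_value_bwd hG hsu hv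
        refine ⟨_, ?_, hsv⟩
        exact (lccSteps_plugA (.seqA .hole _) hsteps).tail ⟨.hole, _, _, .nseq hx', rfl, rfl⟩
    | ncase =>
      cases hsim with
      | base hp => exact hG.bwd _ _ hp .hole _ _ rfl .ncase
      | caseE hse hsalts =>
        obtain ⟨args, hsteps, hargs⟩ := Sim_constr_bwd hG hse
        refine ⟨_, ?_, Sim_subst hG.cl (hsalts _) _ _ (Sim_instSub hargs)⟩
        exact (lccSteps_plugA (.caseA _ .hole _) hsteps).tail ⟨.hole, _, _, .ncase, rfl, rfl⟩
  | appA B1 w' ih =>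
    intro a hsim
    cases hsim with
    | base hp => exact hG.bwd _ _ hp (.appA B1 w') _ _ rfl hb
    | app hsu hsv =>
      obtain ⟨a1, hsteps, hsim'⟩ := ih _ hsu
      exact ⟨.app a1 _, lccSteps_plugA (.appA .hole _) hsteps, .app hsim' hsv⟩
  | seqA B1 w' ih =>
    intro a hsim
    cases hsim with
    | base hp => exact hG.bwd _ _ hp (.seqA B1 w') _ _ rfl hb
    | seqE hsu hsv =>
      obtain ⟨a1, hsteps, hsim'⟩ := ih _ hsu
      exact ⟨.seqE a1 _, lccSteps_plugA (.seqA .hole _) hsteps, .seqE hsim' hsv⟩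
  | caseA T B1 alts' ih =>
    intro a hsim
    cases hsim with
    | base hp => exact hG.bwd _ _ hp (.caseA T B1 alts') _ _ rfl hb
    | caseE hse hsalts =>
      obtain ⟨a1, hsteps, hsim'⟩ := ih _ hse
      exact ⟨.caseE T a1 _, lccSteps_plugA (.caseA T .hole _) hsteps, .caseE hsim' hsalts⟩

lemma Sim_conv_fwd_aux (hG : GoodPair P) {a v : Exp S}
    (hs : Relation.ReflTransGen lccStep a v) (hv : isValue v) :
    ∀ b, Sim P a b → lccConv b := by
  induction hs using Relation.ReflTransGen.head_induction_on with
  | refl =>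
    intro b hsim
    exact ⟨b, .refl, Sim_value_right hG hsim hv⟩
  | head hstep hrest ih =>
    intro b hsim
    obtain ⟨A, r, r', hbase, rfl, rfl⟩ := hstep
    obtain ⟨b', hsteps, hsim'⟩ := Sim_fwd_step hG hbase A b hsim
    exact lccConv_of_steps hsteps (ih b' hsim')

lemma Sim_conv_bwd_aux (hG : GoodPair P) {b v : Exp S}
    (hs : Relation.ReflTransGen lccStep b v) (hv : isValue v) :
    ∀ a, Sim P a b → lccConv a := by
  induction hs using Relation.ReflTransGen.head_induction_on with
  | refl =>
    intro a hsim
    obtain ⟨x', hsteps, hx', _⟩ := Sim_value_bwd hG hsim hv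
    exact ⟨x', hsteps, hx'⟩
  | head hstep hrest ih =>
    intro a hsim
    obtain ⟨B, r, r', hbase, rfl, rfl⟩ := hstep
    obtain ⟨a', hsteps, hsim'⟩ := Sim_bwd_step hG hbase B a hsim
    exact lccConv_of_steps hsteps (ih a' hsim')

/-- convergence equivalence from a good pair relation -/
lemma Sim_conv_iff (hG : GoodPair P) {a b : Exp S} (hsim : Sim P a b) :
    lccConv a ↔ lccConv b := by
  constructor
  · rintro ⟨v, hs, hv⟩
    exact Sim_conv_fwd_aux hG hs hv b hsim
  · rintro ⟨v, hs, hv⟩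
    exact Sim_conv_bwd_aux hG hs hv a hsim

/-- plugging a base pair into an arbitrary context yields `Sim`-related expressions -/
lemma Sim_plugC {s t : Exp S} (hst : P s t) : ∀ C : Ctx S, Sim P (plugC C s) (plugC C t) := by
  intro C
  induction C with
  | hole => exact .base hst
  | appL C w ih => exact .app ih (Sim_refl P w)
  | appR w C ih => exact .app (Sim_refl P w) ih
  | lamC C ih => exact .lam ih
  | seqL C w ih => exact .seqE ih (Sim_refl P w)
  | seqR w C ih => exact .seqE (Sim_refl P w) ih
  | constrC T c i args C ih =>
    refine .constr (fun j => ?_)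
    rcases eq_or_ne j i with rfl | hne
    · simpa [Function.update] using ih
    · simp only [Function.update, dif_neg hne]
      exact Sim_refl P _
  | caseScrut T C alts ih => exact .caseE ih (fun c => Sim_refl P _)
  | caseAlt T c0 scrut alts C ih =>
    refine .caseE (Sim_refl P _) (fun c => ?_)
    simp only [updAlt]
    split
    · exact ih
    · exact Sim_refl P _
  | letrecB n i b C t ih =>
    refine .letrecE (fun j => ?_) (Sim_refl P _)
    rcases eq_or_ne j i with rfl | hne
    · simpa [Function.update] using ih
    · simp only [Function.update, dif_neg hne]
      exact Sim_refl P _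
  | letrecT n b C ih => exact .letrecE (fun i => Sim_refl P _) ih

/-- contextual equivalence from a good pair relation -/
lemma eqLcc_of_GoodPair (hG : GoodPair P) {s t : Exp S} (hst : P s t) : eqLcc s t := by
  constructor
  · intro C _ hc
    exact (Sim_conv_iff hG (Sim_plugC hst C)).1 hc
  · intro C _ hc
    exact (Sim_conv_iff hG (Sim_plugC hst C)).2 hc

end Core
namespace Core

variable {S : Sig}

/-- no redex is a value -/
lemma redex_not_value {A : ACtx S} {r r' : Exp S} (hb : LccBase r r') :
    ¬ isValue (plugA A r) := by
  intro hv
  obtain ⟨hA, hvr⟩ := plugA_value hv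
  exact no_base_of_value hvr hb

/-- the pair relation for a single normal-order step -/
lemma GoodPair_step {s t : Exp S} (h : lccStep s t) (hcs : closed s) :
    GoodPair (fun x y => x = s ∧ y = t) := by
  obtain ⟨A0, r0, r0', hb0, rfl, rfl⟩ := h
  have hstep : lccStep (plugA A0 r0) (plugA A0 r0') := ⟨A0, r0, r0', hb0, rfl, rfl⟩
  refine ⟨?_, ?_, ?_, ?_, ?_⟩
  · rintro x y ⟨rfl, rfl⟩
    exact ⟨hcs, lccStep_closed hstep hcs⟩
  · rintro x y ⟨rfl, rfl⟩
    exact redex_not_value hb0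
  · rintro x y ⟨rfl, rfl⟩ A r r' hx hb
    obtain ⟨hA, hr⟩ := decomp_unique hb hb0 hx.symm
    subst hA hr
    rw [base_det hb hb0]
    exact ⟨_, .refl, Sim_refl _ _⟩
  · rintro x y ⟨rfl, rfl⟩ B r r' hy hb
    refine ⟨plugA B r', ?_, Sim_refl _ _⟩
    exact .head hstep (.head (hy ▸ ⟨B, r, r', hb, rfl, rfl⟩) .refl)
  · rintro x y ⟨rfl, rfl⟩ hv
    exact .head hstep .refl

/-- the pair relation identifying a closed diverging expression with `Ω` -/
lemma GoodPair_div : GoodPair (fun x y : Exp S => closed x ∧ ¬ lccConv x ∧ y = Omega) := by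
  refine ⟨?_, ?_, ?_, ?_, ?_⟩
  · rintro x y ⟨hc, hd, rfl⟩
    exact ⟨hc, Omega_closed⟩
  · rintro x y ⟨hc, hd, rfl⟩ hv
    exact hd ⟨x, .refl, hv⟩
  · rintro x y ⟨hc, hd, rfl⟩ A r r' rfl hb
    have hstep : lccStep (plugA A r) (plugA A r') := ⟨A, r, r', hb, rfl, rfl⟩
    refine ⟨Omega, .refl, .base ⟨lccStep_closed hstep hc, ?_, rfl⟩⟩
    intro hconv
    exact hd (lccConv_of_steps (.head hstep .refl) hconv)
  · rintro x y ⟨hc, hd, rfl⟩ B r r' hy hb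
    obtain ⟨hB, hr, hr'⟩ := Omega_plugA hb hy.symm
    subst hB hr
    refine ⟨x, .refl, ?_⟩
    rw [show plugA .hole r' = r' from rfl, hr']
    exact .base ⟨hc, hd, rfl⟩
  · rintro x y ⟨hc, hd, rfl⟩ hv
    exact absurd hv Omega_not_value

/-- a single normal-order step on a closed expression preserves `eqLcc` -/
lemma eqLcc_step {s t : Exp S} (h : lccStep s t) (hcs : closed s) : eqLcc s t :=
  eqLcc_of_GoodPair (GoodPair_step h hcs) ⟨rfl, rfl⟩

lemma leLcc_refl (s : Exp S) : leLcc s s := fun _ _ h => h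

lemma leLcc_trans {s t u : Exp S} (h1 : leLcc s t) (h2 : leLcc t u) : leLcc s u :=
  fun C hC hc => h2 C hC (h1 C hC hc)

lemma eqLcc_refl (s : Exp S) : eqLcc s s := ⟨leLcc_refl s, leLcc_refl s⟩

lemma eqLcc_symm {s t : Exp S} (h : eqLcc s t) : eqLcc t s := ⟨h.2, h.1⟩

lemma eqLcc_trans {s t u : Exp S} (h1 : eqLcc s t) (h2 : eqLcc t u) : eqLcc s u :=
  ⟨leLcc_trans h1.1 h2.1, leLcc_trans h2.2 h1.2⟩

/-- normal-order reduction of closed expressions preserves `eqLcc` -/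
lemma eqLcc_steps {s t : Exp S} (h : Relation.ReflTransGen lccStep s t) (hcs : closed s) :
    eqLcc s t := by
  induction h with
  | refl => exact eqLcc_refl s
  | tail hst hstep ih =>
    exact eqLcc_trans (ih) (eqLcc_step hstep (lccSteps_closed hst hcs))

/-- all closed diverging expressions are equivalent to `Ω` -/
lemma eqLcc_Omega {s : Exp S} (hc : closed s) (hd : ¬ lccConv s) : eqLcc s Omega :=
  eqLcc_of_GoodPair GoodPair_div ⟨hc, hd, rfl⟩

end Core
namespace Core

variable {S : Sig}

/-- composition of general contexts -/
def compC : Ctx S → Ctx S → Ctx S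
  | .hole, D => D
  | .appL C t, D => .appL (compC C D) t
  | .appR t C, D => .appR t (compC C D)
  | .lamC C, D => .lamC (compC C D)
  | .seqL C t, D => .seqL (compC C D) t
  | .seqR t C, D => .seqR t (compC C D)
  | .constrC T c i args C, D => .constrC T c i args (compC C D)
  | .caseScrut T C alts, D => .caseScrut T (compC C D) alts
  | .caseAlt T c0 scrut alts C, D => .caseAlt T c0 scrut alts (compC C D)
  | .letrecB n i b C t, D => .letrecB n i b (compC C D) t
  | .letrecT n b C, D => .letrecT n b (compC C D)

lemma plugC_compC (C D : Ctx S) (e : Exp S) :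
    plugC (compC C D) e = plugC C (plugC D e) := by
  induction C <;> simp [compC, plugC, *]

lemma lfreeCtx_compC {C D : Ctx S} (hC : lfreeCtx C) (hD : lfreeCtx D) :
    lfreeCtx (compC C D) := by
  induction C <;> simp_all [compC, lfreeCtx]

/-- inversion of basic rules at fixed head shapes -/
lemma base_app_inv {u v r' : Exp S} (hb : LccBase (.app u v) r') :
    ∃ u0, u = .lam u0 ∧ r' = subst (consSub v) u0 := by
  cases hb
  exact ⟨_, rfl, rfl⟩

lemma base_seq_inv {u v r' : Exp S} (hb : LccBase (.seqE u v) r') : isValue u ∧ r' = v := by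
  cases hb with
  | nseq hv => exact ⟨hv, rfl⟩

lemma base_case_inv {T : S.TyName} {scrut r' : Exp S} {alts : (c : S.CName T) → Exp S}
    (hb : LccBase (.caseE T scrut alts) r') :
    ∃ c args, scrut = .constr T c args ∧ r' = subst (instSub args) (alts c) := by
  cases hb with
  | ncase => exact ⟨_, _, rfl, rfl⟩

/-- case on a lambda is stuck -/
lemma case_lam_div {T : S.TyName} {u : Exp S} {alts : (c : S.CName T) → Exp S} :
    ¬ lccConv (Exp.caseE T (.lam u) alts) := by
  refine stuck_div (by simp [isValue]) ?_
  rintro t ⟨A, r, r', hb, heq, rfl⟩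
  cases A with
  | hole =>
    simp only [plugA] at heq
    subst heq
    obtain ⟨c, args, hsc, _⟩ := base_case_inv hb
    simp at hsc
  | appA A' w => cases heq
  | seqA A' w => cases heq
  | caseA T' A' alts' =>
    simp only [plugA] at heq
    obtain ⟨hT, h1, h2⟩ := Exp.caseE.inj heq
    subst hT
    obtain ⟨hA, hr⟩ := plugA_eq_lam h1.symm
    subst hA hr
    cases hb

/-- application of a constructor is stuck -/
lemma app_constr_div {T : S.TyName} {c} {args : Fin (S.arity T c) → Exp S} {w : Exp S} :
    ¬ lccConv (Exp.app (.constr T c args) w) := by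
  refine stuck_div (by simp [isValue]) ?_
  rintro t ⟨A, r, r', hb, heq, rfl⟩
  cases A with
  | hole =>
    simp only [plugA] at heq
    subst heq
    obtain ⟨u0, hu, _⟩ := base_app_inv hb
    simp at hu
  | appA A' w' =>
    simp only [plugA] at heq
    obtain ⟨h1, h2⟩ := Exp.app.inj heq
    obtain ⟨hA, hr⟩ := plugA_eq_constr h1.symm
    subst hA hr
    cases hb
  | seqA A' w' => cases heq
  | caseA T' A' alts' => cases heq

/-- case on a constructor of a different type is stuck -/
lemma case_mismatch_div {T T' : S.TyName} (hne : T' ≠ T) {c'} {args' : Fin (S.arity T' c') → Exp S}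
    {alts : (c : S.CName T) → Exp S} :
    ¬ lccConv (Exp.caseE T (.constr T' c' args') alts) := by
  refine stuck_div (by simp [isValue]) ?_
  rintro t ⟨A, r, r', hb, heq, rfl⟩
  cases A with
  | hole =>
    simp only [plugA] at heq
    subst heq
    obtain ⟨c, args, hsc, _⟩ := base_case_inv hb
    obtain ⟨hT, _, _⟩ := Exp.constr.inj hsc
    exact hne hT
  | appA A' w => cases heq
  | seqA A' w => cases heq
  | caseA T'' A' alts' =>
    simp only [plugA] at heq
    obtain ⟨hT, h1, h2⟩ := Exp.caseE.inj heq
    subst hT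
    obtain ⟨hA, hr⟩ := plugA_eq_constr h1.symm
    subst hA hr
    cases hb

lemma trueE_lfree : lfree (trueE : Exp S) := by
  simp [trueE, lfree]

lemma subst_trueE_value (σ : ℕ → Exp S) : isValue (subst σ (trueE : Exp S)) := by
  simp [trueE, subst, isValue]

lemma trueE_value : isValue (trueE : Exp S) := by simp [trueE, isValue]

lemma isValue_cases {v : Exp S} (hv : isValue v) :
    (∃ u, v = .lam u) ∨ ∃ T c args, v = .constr T c args := by
  cases v with
  | lam u => exact .inl ⟨u, rfl⟩
  | constr T c args => exact .inr ⟨T, c, args, rfl⟩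
  | var k => simp [isValue] at hv
  | app u v => simp [isValue] at hv
  | seqE u v => simp [isValue] at hv
  | caseE T e alts => simp [isValue] at hv
  | letrecE n b t => simp [isValue] at hv

end Core
namespace Core

variable {S : Sig}

/-- the `case` reduction step -/
lemma conv_case_step {T : S.TyName} {c} {args} {alts : (c : S.CName T) → Exp S} :
    lccStep (Exp.caseE T (.constr T c args) alts) (subst (instSub args) (alts c)) :=
  ⟨.hole, _, _, .ncase, rfl, rfl⟩

lemma conv_case {T : S.TyName} {c} {args} {s : Exp S} {alts : (c : S.CName T) → Exp S}
    (hs : Relation.ReflTransGen lccStep s (.constr T c args))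
    (hval : isValue (subst (instSub args) (alts c))) :
    lccConv (Exp.caseE T s alts) :=
  ⟨_, (lccSteps_plugA (.caseA T .hole alts) hs).tail conv_case_step, hval⟩

lemma conv_seq {s u : Exp S} (hs : Relation.ReflTransGen lccStep s (.lam u)) :
    lccConv (Exp.seqE s trueE) :=
  ⟨trueE, (lccSteps_plugA (.seqA .hole trueE) hs).tail
    ⟨.hole, _, _, .nseq (by exact trivial), rfl, rfl⟩, trueE_value⟩

lemma not_Omega_value {s v : Exp S} (hv : isValue v) (h1 : eqLcc s Omega) (h2 : eqLcc s v) :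
    False :=
  Omega_div (leLcc_trans h2.2 h1.1 .hole trivial ⟨v, .refl, hv⟩)

lemma not_lam_constr {s s' : Exp S} {T c args} (h1 : eqLcc s (.lam s'))
    (h2 : eqLcc s (.constr T c args)) : False := by
  have h3 : leLcc (.constr T c args) (.lam s') := leLcc_trans h2.2 h1.1
  have hC : lfreeCtx (Ctx.caseScrut T Ctx.hole (fun _ => trueE) : Ctx S) :=
    ⟨trivial, fun _ => trueE_lfree⟩
  have hcv : lccConv (plugC (Ctx.caseScrut T Ctx.hole (fun _ => trueE)) (Exp.constr T c args)) :=
    conv_case .refl (subst_trueE_value _)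
  exact case_lam_div (h3 _ hC hcv)

/-- uniform alternatives: `X` for `c`, `Ω` otherwise -/
def altsIf (T : S.TyName) (c : S.CName T) (X : Exp S) : (c' : S.CName T) → Exp S :=
  fun c' => @ite _ (c' = c) (S.deceq T c' c) X Omega

lemma altsIf_same {T : S.TyName} {c : S.CName T} {X : Exp S} : altsIf T c X c = X := by
  simp [altsIf]

lemma altsIf_other {T : S.TyName} {c c' : S.CName T} {X : Exp S} (h : c' ≠ c) :
    altsIf T c X c' = Omega := by
  simp [altsIf, h]

lemma altsIf_lfree {T : S.TyName} {c : S.CName T} {X : Exp S} (hX : lfree X) (c' : S.CName T) :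
    lfree (altsIf T c X c') := by
  unfold altsIf; split
  exacts [hX, Omega_lfree]

/-- if `s ≤ t`, `s` reduces to a constructor application, and `t` is closed, then `t`
reduces to an application of the same constructor -/
lemma t_constr {s t : Exp S} {T c args} (hle : leLcc s t)
    (hs : Relation.ReflTransGen lccStep s (.constr T c args)) :
    ∃ targs, Relation.ReflTransGen lccStep t (.constr T c targs) := by
  have hC1 : lfreeCtx (Ctx.caseScrut T Ctx.hole (fun _ => trueE) : Ctx S) :=
    ⟨trivial, fun _ => trueE_lfree⟩
  have hconv1 : lccConv (plugC (Ctx.caseScrut T Ctx.hole (fun _ => trueE)) s) :=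
    conv_case hs (subst_trueE_value _)
  have hconv2 : lccConv (plugA (.caseA T .hole (fun _ => trueE)) t) := hle _ hC1 hconv1
  obtain ⟨w, htw, hwv, hconvw⟩ := plugA_conv hconv2
  rcases isValue_cases hwv with ⟨u', rfl⟩ | ⟨T₂, c₂, targs, rfl⟩
  · exact absurd hconvw case_lam_div
  · rcases eq_or_ne T₂ T with rfl | hne
    · rcases eq_or_ne c₂ c with rfl | hnec
      · exact ⟨targs, htw⟩
      · exfalso
        have hC2 : lfreeCtx (Ctx.caseScrut T₂ Ctx.hole (altsIf T₂ c trueE) : Ctx S) :=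
          ⟨trivial, altsIf_lfree trueE_lfree⟩
        have hconv1' : lccConv (plugC (Ctx.caseScrut T₂ Ctx.hole (altsIf T₂ c trueE)) s) :=
          conv_case hs (by rw [altsIf_same]; exact subst_trueE_value _)
        have hconv2' : lccConv (plugA (.caseA T₂ .hole (altsIf T₂ c trueE)) t) :=
          hle _ hC2 hconv1'
        obtain ⟨w', htw', hwv', hconvw'⟩ := plugA_conv hconv2'
        have hww : w' = .constr T₂ c₂ targs := value_unique htw' hwv' htw (by simp [isValue])
        subst hww
        have hX : lccConv (subst (instSub targs) (altsIf T₂ c trueE c₂)) :=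
          lccConv_step conv_case_step hconvw'
        rw [altsIf_other hnec, subst_closed Omega_closed] at hX
        exact Omega_div hX
    · exact absurd hconvw (case_mismatch_div hne)

/-- selecting a component of a converged constructor application -/
lemma case_sel_eq {T : S.TyName} {c} {args : Fin (S.arity T c) → Exp S}
    (hcl : closed (Exp.constr T c args)) (i : Fin (S.arity T c)) :
    eqLcc (Exp.caseE T (.constr T c args) (altsIf T c (.var i))) (args i) := by
  have hstep := conv_case_step (T := T) (c := c) (args := args) (alts := altsIf T c (.var i))
  have h1 : subst (instSub args) (altsIf T c (.var (i : ℕ)) c) = args i := by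
    rw [altsIf_same]
    show instSub args (i : ℕ) = args i
    simp [instSub, i.isLt]
  rw [h1] at hstep
  refine eqLcc_step hstep ⟨hcl, fun c' => ?_⟩
  unfold altsIf
  split
  · show (i : ℕ) < 0 + S.arity T c'
    next h => rw [h]; have := i.isLt; omega
  · exact closedUnder_mono (by omega) _ Omega_closed

lemma subst_closing {σ : ℕ → Exp S} {e : Exp S} (hc : closed (subst σ e)) :
    subst (fun k => subst (fun _ => Omega) (σ k)) e = subst σ e := by
  rw [← subst_subst]
  exact subst_closed hc _

lemma subst_consSub_eq {u : Exp S} (hc1 : closedUnder 1 u) (σ' : ℕ → Exp S) :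
    subst (consSub (σ' 0)) u = subst σ' u := by
  refine subst_ext u 1 _ _ (fun k hk => ?_) hc1
  interval_cases k
  rfl

/-- open extension of `leLcc` for the bodies of contextually-related abstractions -/
lemma openL_of_lam {u u' : Exp S} (hle_lam : leLcc (Exp.lam u) (Exp.lam u'))
    (hclu : closedUnder 1 u) (hclu' : closedUnder 1 u') : openL leLcc u u' := by
  intro σ hσ hc1 hc2
  set σ' : ℕ → Exp S := fun k => subst (fun _ => Omega) (σ k) with hσ'
  have hr_cl : closed (σ' 0) := closed_subst_omega _
  have hr_lf : lfree (σ' 0) := lfree_subst _ (hσ 0) _ (fun _ => Omega_lfree)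
  have e1eq : subst (consSub (σ' 0)) u = subst σ u := by
    rw [subst_consSub_eq hclu σ']
    exact subst_closing hc1
  have e2eq : subst (consSub (σ' 0)) u' = subst σ u' := by
    rw [subst_consSub_eq hclu' σ']
    exact subst_closing hc2
  have step1 : lccStep (Exp.app (.lam u) (σ' 0)) (subst σ u) := by
    rw [← e1eq]; exact ⟨.hole, _, _, .nbeta, rfl, rfl⟩
  have step2 : lccStep (Exp.app (.lam u') (σ' 0)) (subst σ u') := by
    rw [← e2eq]; exact ⟨.hole, _, _, .nbeta, rfl, rfl⟩
  have eq1 : eqLcc (Exp.app (.lam u) (σ' 0)) (subst σ u) := eqLcc_step step1 ⟨hclu, hr_cl⟩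
  have eq2 : eqLcc (Exp.app (.lam u') (σ' 0)) (subst σ u') := eqLcc_step step2 ⟨hclu', hr_cl⟩
  have hCfree : lfreeCtx (Ctx.appL Ctx.hole (σ' 0) : Ctx S) := ⟨trivial, hr_lf⟩
  have le12 : leLcc (Exp.app (.lam u) (σ' 0)) (Exp.app (.lam u') (σ' 0)) := by
    intro C hC hcv
    have h1 : lccConv (plugC (compC C (.appL .hole (σ' 0))) (Exp.lam u)) := by
      rw [plugC_compC]; exact hcv
    have h2 := hle_lam _ (lfreeCtx_compC hC hCfree) h1
    rw [plugC_compC] at h2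
    exact h2
  exact leLcc_trans eq1.2 (leLcc_trans le12 eq2.1)

/-- an abstraction below a constructor application has a `cBot` body -/
lemma cBot_of {s t u : Exp S} {T c targs} (hle : leLcc s t) (hcs : closed s)
    (hs : Relation.ReflTransGen lccStep s (.lam u))
    (ht : Relation.ReflTransGen lccStep t (.constr T c targs)) : cBot u := by
  intro σ hσ hc1 hconv
  set σ' : ℕ → Exp S := fun k => subst (fun _ => Omega) (σ k) with hσ'
  have hclu : closedUnder 1 u := lccSteps_closed hs hcs
  have hr_lf : lfree (σ' 0) := lfree_subst _ (hσ 0) _ (fun _ => Omega_lfree)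
  have e1eq : subst (consSub (σ' 0)) u = subst σ u := by
    rw [subst_consSub_eq hclu σ']
    exact subst_closing hc1
  have hconv_app_s : lccConv (Exp.app s (σ' 0)) := by
    refine lccConv_of_steps
      ((lccSteps_plugA (.appA .hole (σ' 0)) hs).tail ⟨.hole, _, _, .nbeta, rfl, rfl⟩) ?_
    rw [e1eq]; exact hconv
  have hCfree : lfreeCtx (Ctx.appL Ctx.hole (σ' 0) : Ctx S) := ⟨trivial, hr_lf⟩
  have hconv_app_t : lccConv (plugA (.appA .hole (σ' 0)) t) :=
    hle (Ctx.appL .hole (σ' 0)) hCfree hconv_app_s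
  obtain ⟨w', htw', hwv', hconvw'⟩ := plugA_conv hconv_app_t
  have hww : w' = .constr T c targs := value_unique htw' hwv' ht (by simp [isValue])
  subst hww
  exact app_constr_div hconvw'

end Core
namespace Core

variable {S : Sig}

lemma t_conv_of_lam {s t u : Exp S} (hle : leLcc s t)
    (hs : Relation.ReflTransGen lccStep s (.lam u)) :
    ∃ w, Relation.ReflTransGen lccStep t w ∧ isValue w := by
  have hCfree : lfreeCtx (Ctx.seqL Ctx.hole trueE : Ctx S) := ⟨trivial, trueE_lfree⟩
  have h1 : lccConv (plugC (Ctx.seqL Ctx.hole trueE) s) := conv_seq hs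
  have h2 : lccConv (plugA (.seqA .hole trueE) t) := hle _ hCfree h1
  obtain ⟨w, htw, hwv, _⟩ := plugA_conv h2
  exact ⟨w, htw, hwv⟩

end Core

namespace Core

/-- Classification of closed `L_lcc`-expressions: every closed
`L_lcc`-expression is contextually equivalent to exactly one of `Ω`, an abstraction, or
a constructor application; and for closed `s ≤_lcc t` one of the four listed cases holds. -/
theorem lcc_classification (S : Sig) :
    (∀ s : Exp S, lfree s → closed s →
      ((eqLcc s Omega ∨ (∃ s', eqLcc s (.lam s')) ∨
          (∃ T c args, eqLcc s (.constr T c args))) ∧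
       ¬(eqLcc s Omega ∧ (∃ s', eqLcc s (.lam s'))) ∧
       ¬(eqLcc s Omega ∧ (∃ T c args, eqLcc s (.constr T c args))) ∧
       ¬((∃ s', eqLcc s (.lam s')) ∧ (∃ T c args, eqLcc s (.constr T c args))))) ∧
    (∀ s t : Exp S, lfree s → lfree t → closed s → closed t → leLcc s t →
      (eqLcc s Omega ∨
       (∃ T c args targs, eqLcc s (.constr T c args) ∧ eqLcc t (.constr T c targs) ∧
          ∀ i, leLcc (args i) (targs i)) ∨
       (∃ s' t', eqLcc s (.lam s') ∧ eqLcc t (.lam t') ∧ openL leLcc s' t') ∨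
       (∃ s' T c targs, eqLcc s (.lam s') ∧ eqLcc t (.constr T c targs) ∧ cBot s'))) := by
  constructor
  · intro s hlf hcs
    refine ⟨?_, ?_, ?_, ?_⟩
    · by_cases hconv : lccConv s
      · obtain ⟨v, hsv, hv⟩ := hconv
        have heq := eqLcc_steps hsv hcs
        rcases isValue_cases hv with ⟨u, rfl⟩ | ⟨T, c, args, rfl⟩
        · exact .inr (.inl ⟨u, heq⟩)
        · exact .inr (.inr ⟨T, c, args, heq⟩)
      · exact .inl (eqLcc_Omega hcs hconv)
    · rintro ⟨h1, s', h2⟩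
      exact not_Omega_value (by exact trivial) h1 h2
    · rintro ⟨h1, T, c, args, h2⟩
      exact not_Omega_value (by exact trivial) h1 h2
    · rintro ⟨⟨s', h1⟩, T, c, args, h2⟩
      exact not_lam_constr h1 h2
  · intro s t hlfs hlft hcs hct hle
    by_cases hconv : lccConv s
    · obtain ⟨v, hsv, hv⟩ := hconv
      rcases isValue_cases hv with ⟨u, rfl⟩ | ⟨T, c, args, rfl⟩
      · -- s converges to an abstraction
        obtain ⟨w, htw, hwv⟩ := t_conv_of_lam hle hsv
        rcases isValue_cases hwv with ⟨u', rfl⟩ | ⟨T, c, targs, rfl⟩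
        · refine .inr (.inr (.inl ⟨u, u', eqLcc_steps hsv hcs, eqLcc_steps htw hct, ?_⟩))
          exact openL_of_lam
            (leLcc_trans (eqLcc_steps hsv hcs).2 (leLcc_trans hle (eqLcc_steps htw hct).1))
            (lccSteps_closed hsv hcs) (lccSteps_closed htw hct)
        · exact .inr (.inr (.inr ⟨u, T, c, targs, eqLcc_steps hsv hcs, eqLcc_steps htw hct,
            cBot_of hle hcs hsv htw⟩))
      · -- s converges to a constructor application
        obtain ⟨targs, htw⟩ := t_constr hle hsv
        refine .inr (.inl ⟨T, c, args, targs, eqLcc_steps hsv hcs, eqLcc_steps htw hct, ?_⟩)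
        intro i
        have hclA : closed (Exp.constr T c args) := lccSteps_closed hsv hcs
        have hclT : closed (Exp.constr T c targs) := lccSteps_closed htw hct
        have eqA := case_sel_eq hclA i
        have eqT := case_sel_eq hclT i
        have hleC : leLcc (Exp.constr T c args) (Exp.constr T c targs) :=
          leLcc_trans (eqLcc_steps hsv hcs).2 (leLcc_trans hle (eqLcc_steps htw hct).1)
        intro C hC hcv
        have hD : lfreeCtx (Ctx.caseScrut T Ctx.hole (altsIf T c (.var i)) : Ctx S) :=
          ⟨trivial, altsIf_lfree (by exact trivial)⟩
        have h1 := eqA.2 C hC hcv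
        have h1' : lccConv (plugC
            (compC C (Ctx.caseScrut T Ctx.hole (altsIf T c (.var i)))) (Exp.constr T c args)) := by
          rw [plugC_compC]; exact h1
        have h2 := hleC _ (lfreeCtx_compC hC hD) h1'
        rw [plugC_compC] at h2
        exact eqT.1 C hC h2
    · exact .inl (eqLcc_Omega hcs hconv)

end Core
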